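/- arXiv:1802.05066 — 3 statements merged into one kernel-verified Lean document; each statement's English description precedes it below -/
import Mathlib

section
/- Let H satisfy the hypotheses of the negative-definiteness result (nonnegative, nonzero in L^1, etc.), let n ≥ 0, φ_n(x) = ∑_{k=0}^n x_k, and let t_n^H = q_n^H(v_n^H) where v_n^H is the unique vector with φ_n(v_n^H)=1 that is q_n^H-orthogonal to ker φ_n. Then the quadratic form t·φ_n² − q_n^H on ℝ^{n+1} is positive definite for t > t_n^H, degenerate for t = t_n^H, and has signature (n,1) for t < t_n^H. -/
open MeasureTheory Set Finset

/-- The real-valued function `ψ_H`. -/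
noncomputable def psiH (H : ℝ → ℝ) (s : ℝ) : ℝ :=
  ∫ t in Ioi (0 : ℝ),
    (H 0 * Real.exp (-t) / t - H t * Real.exp (-(s * t)) / (1 - Real.exp (-t)))

/-- The symmetric bilinear form attached to `q_n^H`. -/
noncomputable def bH (H : ℝ → ℝ) (n : ℕ) (x y : Fin (n + 1) → ℝ) : ℝ :=
  ∑ i, ∑ j, x i * y j * psiH H |(i.1 : ℝ) - (j.1 : ℝ)|

/-- The quadratic form `q_n^H`. -/
noncomputable def qH (H : ℝ → ℝ) (n : ℕ) (x : Fin (n + 1) → ℝ) : ℝ :=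
  bH H n x x

namespace QAux



noncomputable def T (x : ℕ → ℝ) (r : ℝ) (N : ℕ) (k : ℕ) : ℝ :=
  ∑ i ∈ Finset.range N, x (k + i) * r ^ i

theorem T_vanish (x : ℕ → ℝ) (r : ℝ) (N : ℕ) (hx : ∀ m, N ≤ m → x m = 0)
    {k : ℕ} (hk : N ≤ k) : T x r N k = 0 := by
  unfold T
  refine Finset.sum_eq_zero fun i _ => ?_
  rw [hx _ (le_trans hk (Nat.le_add_right _ _)), zero_mul]

theorem T_rec (x : ℕ → ℝ) (r : ℝ) (N : ℕ) (hx : ∀ m, N ≤ m → x m = 0) (k : ℕ) :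
    T x r N k = x k + r * T x r N (k + 1) := by
  rcases N with _ | M
  · simp [T, hx k (Nat.zero_le _)]
  · unfold T
    rw [Finset.sum_range_succ', Finset.sum_range_succ]
    rw [hx (k + 1 + M) (by omega), zero_mul, add_zero, add_zero, Finset.mul_sum]
    simp only [pow_zero, mul_one]
    rw [add_comm]
    congr 1
    refine Finset.sum_congr rfl fun i _ => ?_
    have : k + (i + 1) = k + 1 + i := by omega
    rw [this]; ring



theorem upper_eq (x : ℕ → ℝ) (r : ℝ) (N : ℕ) (hx : ∀ m, N ≤ m → x m = 0) (i : ℕ) :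
    ∑ j ∈ Finset.Ico (i + 1) N, x i * x j * r ^ (j - i) = x i * (r * T x r N (i + 1)) := by
  rw [Finset.sum_Ico_eq_sum_range]
  unfold T
  rw [Finset.mul_sum, Finset.mul_sum]
  rw [Finset.sum_subset (Finset.range_subset_range.2 (Nat.sub_le _ _))]
  · refine Finset.sum_congr rfl fun k _ => ?_
    have : i + 1 + k - i = k + 1 := by omega
    rw [this]; ring
  · intro k _ hk
    simp [hx (i + 1 + k) (by simp at hk ⊢; omega)]

theorem Q_eq (x : ℕ → ℝ) (r : ℝ) (N : ℕ) (hx : ∀ m, N ≤ m → x m = 0) :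
    ∑ i ∈ Finset.range N, ∑ j ∈ Finset.range N, x i * x j * r ^ (Nat.dist i j)
      = (1 - r ^ 2) * ∑ k ∈ Finset.range N, (T x r N k) ^ 2
        + r ^ 2 * (T x r N 0) ^ 2 := by
  have split : ∀ i ∈ Finset.range N,
      ∑ j ∈ Finset.range N, x i * x j * r ^ (Nat.dist i j)
        = (∑ j ∈ Finset.range (i + 1), x i * x j * r ^ (i - j))
          + ∑ j ∈ Finset.Ico (i + 1) N, x i * x j * r ^ (j - i) := by
    intro i hi
    rw [Finset.range_eq_Ico, ← Finset.sum_Ico_consecutive _ (Nat.zero_le (i+1))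
      (by simp at hi; omega), ← Finset.range_eq_Ico]
    congr 1
    · refine Finset.sum_congr rfl fun j hj => ?_
      simp only [Finset.mem_range] at hj
      rw [Nat.dist_eq_sub_of_le_right (by omega)]
    · refine Finset.sum_congr rfl fun j hj => ?_
      simp only [Finset.mem_Ico] at hj
      rw [Nat.dist_eq_sub_of_le (by omega)]
  rw [Finset.sum_congr rfl split, Finset.sum_add_distrib]
  -- lower triangle sum equals upper triangle sum
  have lower : ∑ i ∈ Finset.range N, ∑ j ∈ Finset.range (i + 1), x i * x j * r ^ (i - j)
      = (∑ i ∈ Finset.range N, x i ^ 2)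
        + ∑ i ∈ Finset.range N, ∑ j ∈ Finset.Ico (i + 1) N, x i * x j * r ^ (j - i) := by
    have swap := Finset.sum_Ico_Ico_comm' 0 N (fun i j => x i * x j * r ^ (j - i))
    simp only [Nat.Ico_zero_eq_range] at swap
    rw [swap]
    have : ∀ i ∈ Finset.range N,
        ∑ j ∈ Finset.range (i + 1), x i * x j * r ^ (i - j)
          = x i ^ 2 + ∑ j ∈ Finset.range i, x j * x i * r ^ (i - j) := by
      intro i _
      rw [Finset.sum_range_succ, Nat.sub_self, pow_zero, mul_one, add_comm]
      congr 1
      · ring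
      · refine Finset.sum_congr rfl fun j _ => ?_; ring
    rw [Finset.sum_congr rfl this, Finset.sum_add_distrib]
  rw [lower]
  have upp : ∀ i ∈ Finset.range N,
      ∑ j ∈ Finset.Ico (i + 1) N, x i * x j * r ^ (j - i)
        = x i * (r * T x r N (i + 1)) := fun i _ => upper_eq x r N hx i
  rw [Finset.sum_congr rfl upp]
  -- now: ∑ x i ^2 + ∑ xᵢ r T(i+1) + ∑ xᵢ r T(i+1) = ...
  have key : ∀ i, x i ^ 2 + (x i * (r * T x r N (i + 1)) + x i * (r * T x r N (i + 1)))
      = (T x r N i) ^ 2 - r ^ 2 * (T x r N (i + 1)) ^ 2 := by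
    intro i
    have h := T_rec x r N hx i
    have : x i = T x r N i - r * T x r N (i + 1) := by linarith
    rw [this]; ring
  rw [add_assoc, ← Finset.sum_add_distrib, ← Finset.sum_add_distrib]

  rw [Finset.sum_congr rfl (fun i _ => key i)]
  rw [Finset.sum_sub_distrib]
  have shift : ∑ i ∈ Finset.range N, r ^ 2 * (T x r N (i + 1)) ^ 2
      = r ^ 2 * ((∑ i ∈ Finset.range N, (T x r N i) ^ 2) + (T x r N N) ^ 2
          - (T x r N 0) ^ 2) := by
    have h1 := Finset.sum_range_succ' (fun i => (T x r N i) ^ 2) N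
    have h2 := Finset.sum_range_succ (fun i => (T x r N i) ^ 2) N
    have h3 : ∑ i ∈ Finset.range N, r ^ 2 * (T x r N (i + 1)) ^ 2
        = r ^ 2 * ∑ i ∈ Finset.range N, (T x r N (i + 1)) ^ 2 :=
      (Finset.mul_sum _ _ _).symm
    rw [h3]
    have h4 : ∑ i ∈ Finset.range N, (T x r N (i + 1)) ^ 2
        = ∑ i ∈ Finset.range N, (T x r N i) ^ 2 + (T x r N N) ^ 2 - (T x r N 0) ^ 2 := by
      linarith
    rw [h4]
  rw [shift, T_vanish x r N hx (le_refl N)]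
  ring

theorem Q_pos (x : ℕ → ℝ) (r : ℝ) (N : ℕ) (hx : ∀ m, N ≤ m → x m = 0)
    (hr0 : 0 < r) (hr1 : r < 1) (hne : ∃ i, x i ≠ 0) :
    0 < ∑ i ∈ Finset.range N, ∑ j ∈ Finset.range N, x i * x j * r ^ (Nat.dist i j) := by
  rw [Q_eq x r N hx]
  have h1 : (0:ℝ) < 1 - r ^ 2 := by nlinarith
  have hsum : 0 ≤ ∑ k ∈ Finset.range N, (T x r N k) ^ 2 :=
    Finset.sum_nonneg fun k _ => sq_nonneg _
  rcases lt_or_eq_of_le hsum with h | h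
  · nlinarith [sq_nonneg (T x r N 0)]
  · -- all T k = 0 for k < N, hence x = 0, contradiction
    exfalso
    have hT : ∀ k, T x r N k = 0 := by
      intro k
      rcases lt_or_ge k N with hk | hk
      · have := (Finset.sum_eq_zero_iff_of_nonneg (fun k _ => sq_nonneg (T x r N k))).1
          h.symm k (Finset.mem_range.2 hk)
        exact pow_eq_zero_iff (n := 2) (by norm_num) |>.1 this
      · exact T_vanish x r N hx hk
    obtain ⟨i, hi⟩ := hne
    apply hi
    have := T_rec x r N hx i
    rw [hT i, hT (i + 1)] at this
    linarith

theorem exp_neg_le_inv (t : ℝ) (ht : 0 ≤ t) : Real.exp (-t) ≤ 1 - t + t ^ 2 := by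
  have h1 : 1 + t ≤ Real.exp t := by linarith [Real.add_one_le_exp t]
  have h2 : 0 < Real.exp t := Real.exp_pos t
  rw [Real.exp_neg]
  rw [inv_le_iff_one_le_mul₀ h2]
  have h3 : (0:ℝ) ≤ 1 - t + t ^ 2 := by nlinarith [sq_nonneg (2*t - 1)]
  nlinarith [mul_le_mul_of_nonneg_left h1 h3]

theorem one_sub_exp_neg_ge (t : ℝ) (ht0 : 0 < t) (ht1 : t ≤ 1 / 2) :
    t / 2 ≤ 1 - Real.exp (-t) := by
  have := exp_neg_le_inv t ht0.le
  nlinarith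

theorem abs_one_sub_exp_sub (t : ℝ) (ht0 : 0 ≤ t) :
    |1 - Real.exp (-t) - t| ≤ t ^ 2 := by
  have h1 := exp_neg_le_inv t ht0
  have h2 : 1 - t ≤ Real.exp (-t) := by linarith [Real.add_one_le_exp (-t)]
  rw [abs_le]; constructor <;> nlinarith

theorem exp_neg_lip (a b : ℝ) (ha : 0 ≤ a) (hb : 0 ≤ b) :
    |Real.exp (-a) - Real.exp (-b)| ≤ |a - b| := by
  wlog h : a ≤ b generalizing a b
  · rw [abs_sub_comm, abs_sub_comm a b]; exact this b a hb ha (by linarith)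
  have h1 : Real.exp (-b) ≤ Real.exp (-a) := Real.exp_le_exp.2 (by linarith)
  have h2 : Real.exp (-a) - Real.exp (-b) ≤ b - a := by
    have : 1 - Real.exp (-(b - a)) ≤ b - a := by linarith [Real.add_one_le_exp (-(b-a))]
    have hea : Real.exp (-a) ≤ 1 := Real.exp_le_one_iff.2 (by linarith)
    have key : Real.exp (-a) - Real.exp (-b) = Real.exp (-a) * (1 - Real.exp (-(b - a))) := by
      rw [mul_sub, mul_one, ← Real.exp_add]; ring_nf
    rw [key]
    calc Real.exp (-a) * (1 - Real.exp (-(b - a))) ≤ 1 * (b - a) := by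
          apply mul_le_mul hea this ?_ zero_le_one
          linarith [Real.exp_le_one_iff.2 (show -(b-a) ≤ 0 by linarith)]
      _ = b - a := one_mul _
  rw [abs_of_nonneg (by linarith : (0:ℝ) ≤ Real.exp (-a) - Real.exp (-b)),
    abs_sub_comm, abs_of_nonneg (by linarith : (0:ℝ) ≤ b - a)]
  linarith



noncomputable def Fker (H : ℝ → ℝ) (s : ℝ) (t : ℝ) : ℝ :=
  H 0 * Real.exp (-t) / t - H t * Real.exp (-(s * t)) / (1 - Real.exp (-t))

theorem Fker_small_bound (H : ℝ → ℝ) (s C : ℝ) (hs : 0 ≤ s) {t : ℝ}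
    (ht0 : 0 < t) (ht1 : t ≤ 1 / 2) (hC : |H t - H 0| ≤ C * t) :
    |Fker H s t| ≤ |H 0| * (4 + 2 * s) + 2 * C := by
  set A := Real.exp (-t) with hA
  set B := Real.exp (-(s * t)) with hB
  set D := 1 - A with hD
  have hApos : 0 < A := Real.exp_pos _
  have hA1 : A ≤ 1 := Real.exp_le_one_iff.2 (by linarith)
  have hBpos : 0 < B := Real.exp_pos _
  have hB1 : B ≤ 1 := Real.exp_le_one_iff.2 (by nlinarith)
  have hDge : t / 2 ≤ D := one_sub_exp_neg_ge t ht0 ht1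
  have hDpos : 0 < D := by linarith
  have hDt : |D - t| ≤ t ^ 2 := by
    have := abs_one_sub_exp_sub t ht0.le
    simpa [hD, hA, sub_sub] using this
  have hAB : |A - B| ≤ (1 + s) * t := by
    have h := exp_neg_lip t (s * t) ht0.le (by nlinarith)
    calc |A - B| ≤ |t - s * t| := h
      _ = |1 - s| * t := by rw [show t - s * t = (1 - s) * t by ring, abs_mul, abs_of_pos ht0]
      _ ≤ (1 + s) * t := by
          apply mul_le_mul_of_nonneg_right _ ht0.le
          rw [abs_le]; constructor <;> linarith
  have hsplit : Fker H s t = H 0 * (A / t - B / D) + (H 0 - H t) * (B / D) := by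
    unfold Fker
    rw [← hA, ← hB, ← hD]
    field_simp
    ring
  have key1 : |A / t - A / D| ≤ 2 := by
    have heq : A / t - A / D = A * (D - t) / (t * D) := by field_simp
    rw [heq, abs_div, abs_mul, abs_of_pos (mul_pos ht0 hDpos)]
    have hnum : |A| * |D - t| ≤ t ^ 2 := by
      calc |A| * |D - t| ≤ 1 * t ^ 2 := by
            apply mul_le_mul _ hDt (abs_nonneg _) zero_le_one
            rw [abs_of_pos hApos]; exact hA1
        _ = t ^ 2 := one_mul _
    have hden : t ^ 2 / 2 ≤ t * D := by nlinarith
    calc |A| * |D - t| / (t * D) ≤ t ^ 2 / (t ^ 2 / 2) :=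
          div_le_div₀ (sq_nonneg t) hnum (by nlinarith) hden
      _ = 2 := by field_simp
  have key2 : |A / D - B / D| ≤ 2 * (1 + s) := by
    rw [div_sub_div_same, abs_div, abs_of_pos hDpos]
    calc |A - B| / D ≤ ((1 + s) * t) / (t / 2) :=
          div_le_div₀ (by nlinarith) hAB (by linarith) hDge
      _ = 2 * (1 + s) := by field_simp
  have key3 : |H 0 - H t| * (B / D) ≤ 2 * C := by
    have h1 : |H 0 - H t| ≤ C * t := by rw [abs_sub_comm]; exact hC
    have h2 : B / D ≤ 2 / t := by
      calc B / D ≤ 1 / (t / 2) := div_le_div₀ zero_le_one hB1 (by linarith) hDge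
        _ = 2 / t := by rw [one_div_div]
    calc |H 0 - H t| * (B / D) ≤ (C * t) * (2 / t) := by
          apply mul_le_mul h1 h2 (by positivity) ?_
          have : (0:ℝ) ≤ |H 0 - H t| := abs_nonneg _
          nlinarith [abs_nonneg (H 0 - H t)]
      _ = 2 * C := by field_simp
  calc |Fker H s t| ≤ |H 0| * |A / t - B / D| + |H 0 - H t| * (B / D) := by
        rw [hsplit]
        refine (abs_add_le _ _).trans ?_
        rw [abs_mul, abs_mul, abs_of_pos (div_pos hBpos hDpos)]
    _ ≤ |H 0| * (4 + 2 * s) + 2 * C := by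
        have habs : |A / t - B / D| ≤ 4 + 2 * s := by
          calc |A / t - B / D| ≤ |A / t - A / D| + |A / D - B / D| := by
                have : A / t - B / D = (A / t - A / D) + (A / D - B / D) := by ring
                rw [this]; exact abs_add_le _ _
            _ ≤ 2 + 2 * (1 + s) := add_le_add key1 key2
            _ = 4 + 2 * s := by ring
        exact add_le_add (mul_le_mul_of_nonneg_left habs (abs_nonneg _)) key3



theorem Fker_aesm (H : ℝ → ℝ) (hInt : IntegrableOn H (Ici 0)) (s : ℝ) :
    AEStronglyMeasurable (Fker H s) (volume.restrict (Ioi 0)) := by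
  have hH : AEStronglyMeasurable H (volume.restrict (Ioi 0)) :=
    hInt.aestronglyMeasurable.mono_measure
      (Measure.restrict_mono Set.Ioi_subset_Ici_self le_rfl)
  have m1 : Measurable fun t : ℝ => H 0 * Real.exp (-t) / t :=
    (measurable_const.mul (Real.measurable_exp.comp measurable_neg)).div measurable_id
  have m2 : Measurable fun t : ℝ => Real.exp (-(s * t)) / (1 - Real.exp (-t)) :=
    (Real.measurable_exp.comp (measurable_id.const_mul s).neg).div
      (measurable_const.sub (Real.measurable_exp.comp measurable_neg))
  have heq : Fker H s = fun t =>
      H 0 * Real.exp (-t) / t - H t * (Real.exp (-(s * t)) / (1 - Real.exp (-t))) := by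
    funext t; unfold Fker; rw [mul_div_assoc, mul_div_assoc]
  rw [heq]
  exact m1.aestronglyMeasurable.sub (hH.mul m2.aestronglyMeasurable)

theorem Fker_integrable (H : ℝ → ℝ) (hInt : IntegrableOn H (Ici 0))
    (hbd : ∃ ε > (0 : ℝ), ∃ C : ℝ, ∀ t ∈ Ioo (0 : ℝ) ε, |(H t - H 0) / t| ≤ C)
    (s : ℝ) (hs : 0 ≤ s) : IntegrableOn (Fker H s) (Ioi 0) := by
  obtain ⟨ε, hε, C, hC⟩ := hbd
  set δ : ℝ := min (ε / 2) (1 / 2) with hδdef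
  have hδ0 : 0 < δ := lt_min (by linarith) (by norm_num)
  have hδε : δ < ε := lt_of_le_of_lt (min_le_left _ _) (by linarith)
  have hδhalf : δ ≤ 1 / 2 := min_le_right _ _
  have hmeas := Fker_aesm H hInt s
  have h1 : IntegrableOn (Fker H s) (Ioc 0 δ) := by
    refine Integrable.mono' (g := fun _ => |H 0| * (4 + 2 * s) + 2 * C)
      (integrableOn_const measure_Ioc_lt_top.ne)
      (hmeas.mono_set Ioc_subset_Ioi_self) ?_
    filter_upwards [ae_restrict_mem measurableSet_Ioc] with t ht
    have ht0 : 0 < t := ht.1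
    have ht1 : t ≤ 1 / 2 := le_trans ht.2 hδhalf
    have hCt : |H t - H 0| ≤ C * t := by
      have := hC t ⟨ht0, lt_of_le_of_lt ht.2 hδε⟩
      rw [abs_div, div_le_iff₀ (abs_pos.2 ht0.ne')] at this
      calc |H t - H 0| ≤ C * |t| := this
        _ = C * t := by rw [abs_of_pos ht0]
    exact Fker_small_bound H s C hs ht0 ht1 hCt
  have h2 : IntegrableOn (Fker H s) (Ioi δ) := by
    have hg1 : IntegrableOn (fun t => |H 0| / δ * Real.exp (-t)) (Ioi δ) := by
      have := (exp_neg_integrableOn_Ioi δ (b := 1) one_pos).const_mul (|H 0| / δ)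
      simpa [IntegrableOn] using this
    have hg2 : IntegrableOn (fun t => (1 - Real.exp (-δ))⁻¹ * |H t|) (Ioi δ) :=
      ((hInt.mono_set (fun t (ht : t ∈ Ioi δ) => le_of_lt (lt_of_le_of_lt hδ0.le ht))).abs.const_mul _)
    refine Integrable.mono' (hg1.add hg2) (hmeas.mono_set (Ioi_subset_Ioi hδ0.le)) ?_
    filter_upwards [ae_restrict_mem measurableSet_Ioi] with t ht
    have htδ : δ < t := ht
    have ht0 : 0 < t := lt_trans hδ0 htδ
    have hexpδ : Real.exp (-δ) < 1 := Real.exp_lt_one_iff.2 (by linarith)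
    have hDδ : 0 < 1 - Real.exp (-δ) := by linarith
    have hD : 1 - Real.exp (-δ) ≤ 1 - Real.exp (-t) :=
      sub_le_sub_left (Real.exp_le_exp.2 (by linarith)) 1
    have hDpos : 0 < 1 - Real.exp (-t) := lt_of_lt_of_le hDδ hD
    have hb1 : |H 0 * Real.exp (-t) / t| ≤ |H 0| / δ * Real.exp (-t) := by
      rw [abs_div, abs_mul, abs_of_pos (Real.exp_pos _), abs_of_pos ht0,
        div_mul_eq_mul_div, div_le_div_iff₀ ht0 hδ0]
      nlinarith [mul_nonneg (abs_nonneg (H 0)) (Real.exp_pos (-t)).le]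
    have hb2 : |H t * Real.exp (-(s * t)) / (1 - Real.exp (-t))|
        ≤ (1 - Real.exp (-δ))⁻¹ * |H t| := by
      rw [abs_div, abs_mul, abs_of_pos (Real.exp_pos _), abs_of_pos hDpos]
      have step1 : |H t| * Real.exp (-(s * t)) ≤ |H t| * 1 :=
        mul_le_mul_of_nonneg_left (Real.exp_le_one_iff.2 (by nlinarith)) (abs_nonneg _)
      rw [mul_one] at step1
      calc |H t| * Real.exp (-(s * t)) / (1 - Real.exp (-t))
          ≤ |H t| / (1 - Real.exp (-δ)) := div_le_div₀ (abs_nonneg _) step1 hDδ hD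
        _ = (1 - Real.exp (-δ))⁻¹ * |H t| := by rw [div_eq_inv_mul]
    show ‖Fker H s t‖ ≤ _
    rw [Real.norm_eq_abs]
    simp only [Pi.add_apply]
    calc |Fker H s t| ≤ |H 0 * Real.exp (-t) / t|
          + |H t * Real.exp (-(s * t)) / (1 - Real.exp (-t))| := abs_sub _ _
      _ ≤ _ := add_le_add hb1 hb2
  have hsub : Ioi (0:ℝ) ⊆ Ioc 0 δ ∪ Ioi δ := by
    intro t ht
    rcases le_or_gt t δ with h | h
    · exact Or.inl ⟨ht, h⟩
    · exact Or.inr h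
  exact (h1.union h2).mono_set hsub


theorem abs_cast_sub (i j : ℕ) : |(i : ℝ) - (j : ℝ)| = (Nat.dist i j : ℝ) := by
  rcases le_total i j with h | h
  · rw [Nat.dist_eq_sub_of_le h, abs_sub_comm, abs_of_nonneg (sub_nonneg.2 (Nat.cast_le.2 h))]
    push_cast [h]; ring
  · rw [Nat.dist_eq_sub_of_le_right h, abs_of_nonneg (sub_nonneg.2 (Nat.cast_le.2 h))]
    push_cast [h]; ring

theorem psiH_eq (H : ℝ → ℝ) (s : ℝ) : psiH H s = ∫ t in Ioi (0 : ℝ), Fker H s t := rfl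

theorem bH_neg (H : ℝ → ℝ)
    (hInt : IntegrableOn H (Ici 0))
    (hpos : ∀ t, 0 ≤ t → 0 ≤ H t)
    (hne : ¬ (∀ᵐ t ∂(volume.restrict (Ioi (0 : ℝ))), H t = 0))
    (hbd : ∃ ε > (0 : ℝ), ∃ C : ℝ, ∀ t ∈ Ioo (0 : ℝ) ε, |(H t - H 0) / t| ≤ C)
    (n : ℕ) (x : Fin (n + 1) → ℝ) (hx0 : x ≠ 0) (hxs : ∑ i, x i = 0) :
    bH H n x x < 0 := by
  classical
  have hN : True := trivial
  set xt : ℕ → ℝ := fun m => if h : m < n + 1 then x ⟨m, h⟩ else 0 with hxt_def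
  have hxt : ∀ i : Fin (n + 1), x i = xt i.1 := fun i => by simp [hxt_def, i.2]; intro h; exact absurd i.2 (by omega)
  have hsupp : ∀ m, n + 1 ≤ m → xt m = 0 := fun m hm => by
    simp [hxt_def, Nat.not_lt.2 hm]; intro h; exact absurd hm (by omega)
  have hxtne : ∃ i, xt i ≠ 0 := by
    obtain ⟨i, hi⟩ := Function.ne_iff.1 hx0
    exact ⟨i.1, by rw [← hxt i]; simpa using hi⟩
  have hsum0 : ∑ i ∈ Finset.range (n + 1), xt i = 0 := by
    rw [← Fin.sum_univ_eq_sum_range]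
    rw [← hxs]
    exact Finset.sum_congr rfl fun i _ => (hxt i).symm
  -- conversion of bH to range sums
  have conv : bH H n x x = ∑ i ∈ Finset.range (n + 1), ∑ j ∈ Finset.range (n + 1),
      xt i * xt j * psiH H |(i : ℝ) - (j : ℝ)| := by
    rw [bH, ← Fin.sum_univ_eq_sum_range
      (fun a => ∑ j ∈ Finset.range (n + 1), xt a * xt j * psiH H |(a : ℝ) - (j : ℝ)|) (n + 1)]
    refine Finset.sum_congr rfl fun i _ => ?_
    rw [← Fin.sum_univ_eq_sum_range
      (fun b => xt i.1 * xt b * psiH H |(i.1 : ℝ) - (b : ℝ)|) (n + 1)]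
    exact Finset.sum_congr rfl fun j _ => by rw [hxt i, hxt j]
  -- integrability of each summand
  have hint1 : ∀ i j : ℕ,
      Integrable (fun t => xt i * xt j * Fker H |(i : ℝ) - (j : ℝ)| t)
        (volume.restrict (Ioi (0:ℝ))) := fun i j =>
    (Fker_integrable H hInt hbd _ (abs_nonneg _)).const_mul _
  set G : ℝ → ℝ := fun t => ∑ i ∈ Finset.range (n + 1), ∑ j ∈ Finset.range (n + 1),
      xt i * xt j * Fker H |(i : ℝ) - (j : ℝ)| t with hG_def
  have hGint : Integrable G (volume.restrict (Ioi (0:ℝ))) :=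
    integrable_finset_sum _ fun i _ => integrable_finset_sum _ fun j _ => hint1 i j
  -- swap sum and integral
  have swap : bH H n x x = ∫ t in Ioi (0:ℝ), G t := by
    rw [conv, hG_def]
    rw [MeasureTheory.integral_finset_sum _
      (fun i _ => integrable_finset_sum _ fun j _ => hint1 i j)]
    refine Finset.sum_congr rfl fun i _ => ?_
    rw [MeasureTheory.integral_finset_sum _ (fun j _ => hint1 i j)]
    refine Finset.sum_congr rfl fun j _ => ?_
    rw [psiH_eq, ← MeasureTheory.integral_const_mul]
  -- pointwise formula on Ioi 0
  set Qv : ℝ → ℝ := fun t => ∑ i ∈ Finset.range (n + 1), ∑ j ∈ Finset.range (n + 1),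
      xt i * xt j * Real.exp (-t) ^ (Nat.dist i j) with hQv_def
  set g : ℝ → ℝ := fun t => H t / (1 - Real.exp (-t)) * Qv t with hg_def
  have hGpt : ∀ t ∈ Ioi (0:ℝ), G t = -g t := by
    intro t _
    have expand : ∀ i j : ℕ, xt i * xt j * Fker H |(i : ℝ) - (j : ℝ)| t
        = xt i * xt j * (H 0 * Real.exp (-t) / t)
          - H t / (1 - Real.exp (-t)) * (xt i * xt j * Real.exp (-t) ^ (Nat.dist i j)) := by
      intro i j
      unfold Fker
      rw [abs_cast_sub i j,
        show -((Nat.dist i j : ℝ) * t) = (Nat.dist i j : ℝ) * (-t) by ring,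
        Real.exp_nat_mul]
      ring
    simp only [hG_def]
    rw [Finset.sum_congr rfl fun i _ => Finset.sum_congr rfl fun j _ => expand i j]
    have e1 : ∑ i ∈ Finset.range (n + 1), ∑ j ∈ Finset.range (n + 1),
        (xt i * xt j * (H 0 * Real.exp (-t) / t)
          - H t / (1 - Real.exp (-t)) * (xt i * xt j * Real.exp (-t) ^ (Nat.dist i j)))
        = (∑ i ∈ Finset.range (n + 1), ∑ j ∈ Finset.range (n + 1),
            xt i * xt j * (H 0 * Real.exp (-t) / t))
          - H t / (1 - Real.exp (-t)) * Qv t := by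
      rw [hQv_def]
      rw [Finset.mul_sum]
      rw [← Finset.sum_sub_distrib]
      refine Finset.sum_congr rfl fun i _ => ?_
      rw [Finset.mul_sum, ← Finset.sum_sub_distrib]
    rw [e1]
    have e2 : ∑ i ∈ Finset.range (n + 1), ∑ j ∈ Finset.range (n + 1),
        xt i * xt j * (H 0 * Real.exp (-t) / t) = 0 := by
      refine Finset.sum_eq_zero fun i _ => ?_
      simp only [mul_assoc]
      rw [← Finset.mul_sum, ← Finset.sum_mul, hsum0, zero_mul, mul_zero]
    rw [e2, hg_def]
    ring
  -- integrability and positivity of g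
  have hGg : G =ᵐ[volume.restrict (Ioi (0:ℝ))] fun t => -g t :=
    Filter.eventuallyEq_of_mem (self_mem_ae_restrict measurableSet_Ioi) hGpt
  have hgint : Integrable g (volume.restrict (Ioi (0:ℝ))) := by
    refine hGint.neg.congr ?_
    filter_upwards [hGg] with t ht
    simp only [Pi.neg_apply] at ht ⊢
    rw [ht]; ring
  have hQvpos : ∀ t : ℝ, 0 < t → 0 < Qv t := by
    intro t ht
    exact Q_pos xt (Real.exp (-t)) (n + 1) hsupp (Real.exp_pos _)
      (Real.exp_lt_one_iff.2 (by linarith)) hxtne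
  have hgnonneg : 0 ≤ᵐ[volume.restrict (Ioi (0:ℝ))] g := by
    filter_upwards [ae_restrict_mem measurableSet_Ioi] with t ht
    have ht0 : (0:ℝ) < t := ht
    have hD : 0 < 1 - Real.exp (-t) := by
      have : Real.exp (-t) < 1 := Real.exp_lt_one_iff.2 (by linarith)
      linarith
    have : 0 ≤ H t / (1 - Real.exp (-t)) * Qv t :=
      mul_nonneg (div_nonneg (hpos t ht0.le) hD.le) (hQvpos t ht0).le
    simpa [hg_def] using this
  have hgpos : 0 < ∫ t in Ioi (0:ℝ), g t := by
    rcases lt_or_eq_of_le (integral_nonneg_of_ae hgnonneg) with h | h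
    · exact h
    · exfalso
      have hz := (MeasureTheory.integral_eq_zero_iff_of_nonneg_ae hgnonneg hgint).1 h.symm
      apply hne
      filter_upwards [hz, ae_restrict_mem measurableSet_Ioi] with t hgt ht
      have ht0 : (0:ℝ) < t := ht
      have hD : 0 < 1 - Real.exp (-t) := by
        have : Real.exp (-t) < 1 := Real.exp_lt_one_iff.2 (by linarith)
        linarith
      have hQ := hQvpos t ht0
      simp only [hg_def, Pi.zero_apply] at hgt
      rcases mul_eq_zero.1 hgt with h1 | h1
      · rcases div_eq_zero_iff.1 h1 with h2 | h2
        · exact h2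
        · exact absurd h2 (by linarith)
      · exact absurd h1 hQ.ne'
  have hfin : bH H n x x = -∫ t in Ioi (0:ℝ), g t := by
    rw [swap, MeasureTheory.integral_congr_ae hGg, MeasureTheory.integral_neg]
  rw [hfin]
  linarith
end QAux

namespace QAux

theorem bH_symm (H : ℝ → ℝ) (n : ℕ) (x y : Fin (n + 1) → ℝ) :
    bH H n x y = bH H n y x := by
  rw [bH, Finset.sum_comm]
  refine Finset.sum_congr rfl fun j _ => Finset.sum_congr rfl fun i _ => ?_
  rw [abs_sub_comm]
  ring

theorem bH_add_right (H : ℝ → ℝ) (n : ℕ) (x y z : Fin (n + 1) → ℝ) :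
    bH H n x (fun i => y i + z i) = bH H n x y + bH H n x z := by
  unfold bH
  rw [← Finset.sum_add_distrib]
  refine Finset.sum_congr rfl fun i _ => ?_
  rw [← Finset.sum_add_distrib]
  exact Finset.sum_congr rfl fun j _ => by ring

theorem bH_smul_right (H : ℝ → ℝ) (n : ℕ) (c : ℝ) (x y : Fin (n + 1) → ℝ) :
    bH H n x (fun i => c * y i) = c * bH H n x y := by
  unfold bH
  rw [Finset.mul_sum]
  refine Finset.sum_congr rfl fun i _ => ?_
  rw [Finset.mul_sum]
  exact Finset.sum_congr rfl fun j _ => by ring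

end QAux

section Main

variable {H : ℝ → ℝ} {n : ℕ} {v : Fin (n + 1) → ℝ}

theorem bH_v_eq (hv1 : ∑ i, v i = 1)
    (hv2 : ∀ y : Fin (n + 1) → ℝ, ∑ i, y i = 0 → bH H n v y = 0)
    (y : Fin (n + 1) → ℝ) : bH H n v y = qH H n v * (∑ i, y i) := by
  set s : ℝ := ∑ i, y i with hs
  have hz : ∑ i, (y i - s * v i) = 0 := by
    rw [Finset.sum_sub_distrib, ← Finset.mul_sum, hv1]
    simp [hs]
  have h0 := hv2 _ hz
  have hyeq : y = fun i => s * v i + (y i - s * v i) := funext fun i => by ring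
  calc bH H n v y = bH H n v (fun i => s * v i + (y i - s * v i)) := by rw [← hyeq]
    _ = bH H n v (fun i => s * v i) + bH H n v (fun i => y i - s * v i) :=
        QAux.bH_add_right H n v _ _
    _ = s * bH H n v v + 0 := by rw [QAux.bH_smul_right, h0]
    _ = qH H n v * s := by rw [qH]; ring

theorem qH_decomp (hv1 : ∑ i, v i = 1)
    (hv2 : ∀ y : Fin (n + 1) → ℝ, ∑ i, y i = 0 → bH H n v y = 0)
    (x : Fin (n + 1) → ℝ) :
    qH H n x = (∑ i, x i) ^ 2 * qH H n v
      + qH H n (fun i => x i - (∑ j, x j) * v i) := by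
  set s : ℝ := ∑ i, x i with hs
  set y : Fin (n + 1) → ℝ := fun i => x i - s * v i with hy
  have hzy : ∑ i, y i = 0 := by
    rw [hy]
    simp only
    rw [Finset.sum_sub_distrib, ← Finset.mul_sum, hv1]
    simp [hs]
  have hxeq : x = fun i => s * v i + y i := funext fun i => by simp [hy]
  have h1 : bH H n x x = s * bH H n x v + bH H n x y := by
    calc bH H n x x = bH H n x (fun i => s * v i + y i) := by rw [← hxeq]
      _ = bH H n x (fun i => s * v i) + bH H n x y := QAux.bH_add_right H n x _ _
      _ = s * bH H n x v + bH H n x y := by rw [QAux.bH_smul_right]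
  have h2 : bH H n x v = qH H n v * s := by
    rw [QAux.bH_symm]
    exact bH_v_eq hv1 hv2 x
  have h3 : bH H n x y = bH H n y y := by
    rw [QAux.bH_symm]
    calc bH H n y x = bH H n y (fun i => s * v i + y i) := by rw [← hxeq]
      _ = bH H n y (fun i => s * v i) + bH H n y y := QAux.bH_add_right H n y _ _
      _ = s * bH H n y v + bH H n y y := by rw [QAux.bH_smul_right]
      _ = bH H n y y := by
          rw [QAux.bH_symm H n y v, bH_v_eq hv1 hv2 y, hzy]
          ring
  rw [qH, h1, h2, h3, qH, qH]
  ring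

end Main

theorem stmt_9 (H : ℝ → ℝ)
    (hInt : IntegrableOn H (Ici 0))
    (hpos : ∀ t, 0 ≤ t → 0 ≤ H t)
    (hne : ¬ (∀ᵐ t ∂(volume.restrict (Ioi (0 : ℝ))), H t = 0))
    (hbd : ∃ ε > (0 : ℝ), ∃ C : ℝ, ∀ t ∈ Ioo (0 : ℝ) ε, |(H t - H 0) / t| ≤ C)
    (n : ℕ) (v : Fin (n + 1) → ℝ)
    (hv1 : ∑ i, v i = 1)
    (hv2 : ∀ y : Fin (n + 1) → ℝ, ∑ i, y i = 0 → bH H n v y = 0) :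
    -- `t > t_n^H` : positive definite
    (∀ t : ℝ, qH H n v < t → ∀ x : Fin (n + 1) → ℝ, x ≠ 0 →
        0 < t * (∑ i, x i) ^ 2 - qH H n x) ∧
    -- `t = t_n^H` : degenerate
    (∃ x : Fin (n + 1) → ℝ, x ≠ 0 ∧ ∀ y : Fin (n + 1) → ℝ,
        qH H n v * (∑ i, x i) * (∑ i, y i) - bH H n x y = 0) ∧
    -- `t < t_n^H` : signature (n, 1)
    (∀ t : ℝ, t < qH H n v →
        (∃ x : Fin (n + 1) → ℝ, t * (∑ i, x i) ^ 2 - qH H n x < 0) ∧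
        (∀ x : Fin (n + 1) → ℝ, x ≠ 0 → ∑ i, x i = 0 →
            0 < t * (∑ i, x i) ^ 2 - qH H n x) ∧
        (∀ x : Fin (n + 1) → ℝ, x ≠ 0 → ∃ y : Fin (n + 1) → ℝ,
            t * (∑ i, x i) * (∑ i, y i) - bH H n x y ≠ 0)) := by
  have negdef : ∀ x : Fin (n + 1) → ℝ, x ≠ 0 → ∑ i, x i = 0 → qH H n x < 0 :=
    fun x hx0 hxs => QAux.bH_neg H hInt hpos hne hbd n x hx0 hxs
  have hv0 : v ≠ 0 := by
    intro h
    rw [h] at hv1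
    simp at hv1
  set c : ℝ := qH H n v with hc
  refine ⟨?_, ?_, ?_⟩
  · -- positive definite for t > c
    intro t ht x hx0
    set s : ℝ := ∑ i, x i with hs
    set y : Fin (n + 1) → ℝ := fun i => x i - s * v i with hy
    have hdec := qH_decomp hv1 hv2 x
    have hzy : ∑ i, y i = 0 := by
      rw [hy]
      simp only
      rw [Finset.sum_sub_distrib, ← Finset.mul_sum, hv1]
      simp [hs]
    by_cases hy0 : y = 0
    · have hqy : qH H n y = 0 := by
        rw [hy0]
        simp [qH, bH]
      have hs0 : s ≠ 0 := by
        intro h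
        apply hx0
        funext i
        have := congrFun hy0 i
        simp only [hy, Pi.zero_apply] at this
        rw [h] at this
        simpa using this
      rw [← hy, ← hs] at hdec
      rw [hdec, hqy]
      have : 0 < (t - c) * s ^ 2 :=
        mul_pos (by linarith) (by positivity)
      nlinarith
    · have hqy : qH H n y < 0 := negdef y hy0 hzy
      rw [← hy, ← hs] at hdec
      rw [hdec]
      nlinarith [sq_nonneg s]
  · -- degenerate at t = c
    refine ⟨v, hv0, fun y => ?_⟩
    rw [bH_v_eq hv1 hv2 y, hv1]
    ring
  · -- signature (n,1) for t < c
    intro t ht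
    refine ⟨⟨v, ?_⟩, ?_, ?_⟩
    · rw [hv1]
      simp only [one_pow, mul_one]
      linarith
    · intro x hx0 hxs
      have := negdef x hx0 hxs
      rw [hxs]
      simpa using this
    · intro x hx0
      by_cases hs0 : (∑ i, x i) = 0
      · refine ⟨x, ?_⟩
        have := negdef x hx0 hs0
        rw [hs0]
        simp only [mul_zero, zero_mul, zero_sub, ne_eq, neg_eq_zero]
        have hq : bH H n x x = qH H n x := rfl
        rw [hq]
        intro h
        rw [h] at this
        exact lt_irrefl 0 this
      · refine ⟨v, ?_⟩
        rw [hv1]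
        have hbxv : bH H n x v = c * (∑ i, x i) := by
          rw [QAux.bH_symm, bH_v_eq hv1 hv2 x]
        rw [hbxv]
        intro h
        apply hs0
        have : (t - c) * (∑ i, x i) = 0 := by linarith
        rcases mul_eq_zero.1 this with h1 | h1
        · linarith
        · exact h1
end

section
/- With notation as above, for every n ≥ 0 one has (ψ_H(0) + ψ_H(n))/2 ≤ t_n^H ≤ t_{n+1}^H. -/
open MeasureTheory Set Finset

lemma aux_geom (r : ℝ) : ∀ (a b : ℕ), a ≤ b →
    ∑ k ∈ Finset.range (a+1), (if k = 0 then 1 else 1 - r^2) * (r ^ (a - k) * r ^ (b - k))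
      = r ^ (b - a) := by
  intro a
  induction a with
  | zero => intro b _; simp
  | succ a ih =>
    intro b hb
    rw [Finset.sum_range_succ]
    have h1 : ∀ k ∈ Finset.range (a+1),
        (if k = 0 then 1 else 1 - r^2) * (r ^ (a + 1 - k) * r ^ (b - k))
        = r * ((if k = 0 then 1 else 1 - r^2) * (r ^ (a - k) * r ^ (b - k))) := by
      intro k hk
      have hk' : k ≤ a := Nat.lt_succ_iff.mp (Finset.mem_range.mp hk)
      have : a + 1 - k = (a - k) + 1 := by omega
      rw [this, pow_succ]
      ring
    rw [Finset.sum_congr rfl h1, ← Finset.mul_sum, ih b (by omega)]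
    have hb1 : b - a = (b - (a+1)) + 1 := by omega
    have hb2 : a + 1 - (a + 1) = 0 := by omega
    rw [hb1, hb2, pow_succ]
    have : ¬ (a + 1 = 0) := by omega
    rw [if_neg this]
    ring

lemma kernel_psd (m : ℕ) (y : Fin m → ℝ) (r : ℝ) (h0 : 0 ≤ r) (h1 : r ≤ 1) :
    0 ≤ ∑ i, ∑ j, y i * y j * r ^ ((i.1 - j.1) + (j.1 - i.1)) := by
  set w : ℕ → ℝ := fun k => if k = 0 then 1 else 1 - r^2 with hw
  set E : ℕ → Fin m → ℝ := fun k i => if k ≤ i.1 then r ^ (i.1 - k) else 0 with hE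
  have entry : ∀ i j : Fin m, r ^ ((i.1 - j.1) + (j.1 - i.1))
      = ∑ k ∈ Finset.range m, w k * (E k i * E k j) := by
    have key : ∀ i j : Fin m, i.1 ≤ j.1 → r ^ ((i.1 - j.1) + (j.1 - i.1))
        = ∑ k ∈ Finset.range m, w k * (E k i * E k j) := by
      intro i j hij
      have h2 : (i.1 - j.1) + (j.1 - i.1) = j.1 - i.1 := by omega
      rw [h2]
      rw [← aux_geom r i.1 j.1 hij]
      rw [← Finset.sum_subset (s₁ := Finset.range (i.1+1)) (s₂ := Finset.range m)
        (by intro k hk; simp only [Finset.mem_range] at hk ⊢; have := i.2; omega)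
        (by intro k _ hk
            simp only [Finset.mem_range, not_lt] at hk
            have : ¬ (k ≤ i.1) := by omega
            simp [hE, this])]
      apply Finset.sum_congr rfl
      intro k hk
      have hki : k ≤ i.1 := by simp only [Finset.mem_range] at hk; omega
      have hkj : k ≤ j.1 := le_trans hki hij
      simp [hw, hE, hki, hkj]
    intro i j
    rcases le_total i.1 j.1 with h | h
    · exact key i j h
    · have := key j i h
      rw [show (i.1 - j.1) + (j.1 - i.1) = (j.1 - i.1) + (i.1 - j.1) by omega, this]
      apply Finset.sum_congr rfl
      intro k _; ring
  calc (0:ℝ) ≤ ∑ k ∈ Finset.range m, w k * (∑ i, y i * E k i)^2 := by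
        apply Finset.sum_nonneg
        intro k _
        apply mul_nonneg _ (sq_nonneg _)
        simp only [hw]
        split
        · norm_num
        · nlinarith
    _ = ∑ i, ∑ j, y i * y j * r ^ ((i.1 - j.1) + (j.1 - i.1)) := by
        have : ∀ k, (∑ i, y i * E k i)^2 = ∑ i, ∑ j, (y i * E k i) * (y j * E k j) := by
          intro k
          rw [sq, Finset.sum_mul_sum]
        simp_rw [this, Finset.mul_sum]
        rw [Finset.sum_comm]
        apply Finset.sum_congr rfl
        intro i _
        rw [Finset.sum_comm]
        apply Finset.sum_congr rfl
        intro j _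
        rw [entry i j, Finset.mul_sum]
        apply Finset.sum_congr rfl
        intro k _; ring

lemma one_sub_exp_le (x : ℝ) : 1 - Real.exp (-x) ≤ x := by
  nlinarith [Real.add_one_le_exp (-x)]

lemma mul_exp_le_one_sub (x : ℝ) (hx : 0 ≤ x) : x * Real.exp (-x) ≤ 1 - Real.exp (-x) := by
  have h := Real.add_one_le_exp x
  have hp : 0 < Real.exp x := Real.exp_pos x
  rw [Real.exp_neg, le_sub_iff_add_le]
  have h2 : x * (Real.exp x)⁻¹ + (Real.exp x)⁻¹ = (x+1) / Real.exp x := by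
    field_simp
  rw [h2, div_le_one hp]
  linarith

lemma exp_lip {x y : ℝ} (hx : 0 ≤ x) (hy : 0 ≤ y) :
    |Real.exp (-x) - Real.exp (-y)| ≤ |x - y| := by
  wlog h : y ≤ x generalizing x y
  · rw [abs_sub_comm, abs_sub_comm x y]; exact this hy hx (le_of_not_ge h)
  have h1 : Real.exp (-x) ≤ Real.exp (-y) := Real.exp_le_exp.2 (by linarith)
  rw [abs_of_nonpos (by linarith), neg_sub, abs_of_nonneg (by linarith)]
  have : Real.exp (-y) - Real.exp (-x) = Real.exp (-y) * (1 - Real.exp (-(x - y))) := by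
    rw [mul_sub, mul_one, ← Real.exp_add]; ring_nf
  rw [this]
  have hy1 : Real.exp (-y) ≤ 1 := Real.exp_le_one_iff.2 (by linarith)
  have h2 : 1 - Real.exp (-(x-y)) ≤ x - y := one_sub_exp_le _
  have h3 : 0 ≤ 1 - Real.exp (-(x-y)) := by
    have : Real.exp (-(x-y)) ≤ 1 := Real.exp_le_one_iff.2 (by linarith)
    linarith
  nlinarith

set_option maxHeartbeats 2000000 in
lemma fH_integrable (H : ℝ → ℝ) (hInt : IntegrableOn H (Ici 0))
    (hbd : ∃ ε > (0 : ℝ), ∃ C : ℝ, ∀ t ∈ Ioo (0 : ℝ) ε, |(H t - H 0) / t| ≤ C)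
    (s : ℝ) (hs : 0 ≤ s) :
    IntegrableOn (fun t => H 0 * Real.exp (-t) / t - H t * Real.exp (-(s * t)) / (1 - Real.exp (-t)))
      (Ioi (0 : ℝ)) := by
  obtain ⟨ε, hε, C, hC⟩ := hbd
  set d : ℝ := 1 - Real.exp (-ε) with hd
  have hd0 : 0 < d := by
    have : Real.exp (-ε) < 1 := Real.exp_lt_one_iff.2 (by linarith)
    simp [hd]; linarith
  -- measurability
  have hHm : AEStronglyMeasurable H (volume.restrict (Ioi (0:ℝ))) :=
    hInt.1.mono_measure (Measure.restrict_mono Set.Ioi_subset_Ici_self le_rfl)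
  have hmeas : AEStronglyMeasurable
      (fun t => H 0 * Real.exp (-t) / t - H t * Real.exp (-(s * t)) / (1 - Real.exp (-t)))
      (volume.restrict (Ioi (0:ℝ))) := by
    have h1 : Measurable (fun t : ℝ => H 0 * Real.exp (-t) / t) :=
      (measurable_const.mul (Real.measurable_exp.comp measurable_neg)).div measurable_id
    have h2 : AEMeasurable (fun t => H t * Real.exp (-(s*t)) / (1 - Real.exp (-t)))
        (volume.restrict (Ioi (0:ℝ))) :=
      (hHm.aemeasurable.mul (Real.measurable_exp.comp
          ((measurable_const.mul measurable_id).neg)).aemeasurable).div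
        ((measurable_const.sub (Real.measurable_exp.comp measurable_neg)).aemeasurable)
    exact (h1.aemeasurable.sub h2).aestronglyMeasurable
  -- dominating function
  set a : ℝ := |H 0| * (1 + 1/d) with ha
  set b : ℝ := 2/d + (1+s) * Real.exp ε with hb
  have i1 : IntegrableOn (fun t => a * Real.exp (-t)) (Ioi (0:ℝ)) := by
    have h := (exp_neg_integrableOn_Ioi 0 one_pos).const_mul a
    simpa [IntegrableOn] using h
  have i2 : IntegrableOn (fun t => b * |H t|) (Ioi (0:ℝ)) := by
    have h := (hInt.mono_set Set.Ioi_subset_Ici_self).norm.const_mul b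
    simpa [IntegrableOn, Real.norm_eq_abs] using h
  have i3 : IntegrableOn (fun t => (Ioo (0:ℝ) ε).indicator (fun _ => C) t) (Ioi (0:ℝ)) := by
    rw [show (fun t => (Ioo (0:ℝ) ε).indicator (fun _ => C) t)
        = (Ioo (0:ℝ) ε).indicator (fun _ => C) from rfl]
    rw [IntegrableOn, integrable_indicator_iff measurableSet_Ioo]
    refine integrableOn_const ?_ ?_
    · rw [Measure.restrict_apply measurableSet_Ioo]
      exact (lt_of_le_of_lt (measure_mono inter_subset_left) measure_Ioo_lt_top).ne
    · exact enorm_ne_top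
  apply Integrable.mono'
    (g := fun t => a * Real.exp (-t) + b * |H t| + (Ioo (0:ℝ) ε).indicator (fun _ => C) t)
    ((i1.add i2).add i3) hmeas
  rw [ae_restrict_iff' measurableSet_Ioi]
  apply ae_of_all
  intro t ht
  simp only [Set.mem_Ioi] at ht
  set e : ℝ := Real.exp (-t) with he
  have he0 : 0 < e := Real.exp_pos _
  have he1 : e < 1 := Real.exp_lt_one_iff.2 (by linarith)
  set D : ℝ := 1 - e with hD
  have hD0 : 0 < D := by simp [hD]; linarith
  have hF1 : D ≤ t := one_sub_exp_le t
  have hF2 : t * e ≤ D := mul_exp_le_one_sub t ht.le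
  -- decomposition
  have hdecomp : H 0 * Real.exp (-t) / t - H t * Real.exp (-(s * t)) / (1 - Real.exp (-t))
      = H 0 * (e/t - e/D) + (H 0 - H t) * (e/D) + H t * ((e - Real.exp (-(s*t)))/D) := by
    rw [← he, ← hD]
    ring
  rw [Real.norm_eq_abs, hdecomp]
  have habs : |H 0 * (e/t - e/D) + (H 0 - H t) * (e/D) + H t * ((e - Real.exp (-(s*t)))/D)|
      ≤ |H 0| * |e/t - e/D| + |H 0 - H t| * (e/D) + |H t| * (|e - Real.exp (-(s*t))|/D) := by
    calc _ ≤ |H 0 * (e/t - e/D) + (H 0 - H t) * (e/D)| + |H t * ((e - Real.exp (-(s*t)))/D)| :=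
          abs_add_le _ _
      _ ≤ |H 0 * (e/t - e/D)| + |(H 0 - H t) * (e/D)| + |H t * ((e - Real.exp (-(s*t)))/D)| := by
          gcongr; exact abs_add_le _ _
      _ = _ := by
          rw [abs_mul, abs_mul, abs_mul, abs_of_nonneg (div_nonneg he0.le hD0.le),
            abs_div, abs_of_nonneg hD0.le]
  -- bound piece 1 : |e/t - e/D| ≤ e
  have hp1 : |e/t - e/D| ≤ e := by
    have h1 : e/t ≤ e/D := by
      apply div_le_div_of_nonneg_left he0.le hD0 hF1
    have h2 : e/D - e/t ≤ e := by
      rw [div_sub_div _ _ (ne_of_gt hD0) (ne_of_gt ht), div_le_iff₀ (by positivity)]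
      have : e * t - e * D = e * (t - D) := by ring
      nlinarith
    rw [abs_sub_comm, abs_of_nonneg (by linarith)]
    linarith
  have heD : e / D ≤ 1 / t := by
    rw [div_le_div_iff₀ hD0 ht]
    linarith
  have hB1 : |H 0| * |e/t - e/D| ≤ a * e := by
    have h1 : |H 0| * |e/t - e/D| ≤ |H 0| * e :=
      mul_le_mul_of_nonneg_left hp1 (abs_nonneg _)
    have h2 : |H 0| * e ≤ a * e := by
      rw [ha]
      have : |H 0| ≤ |H 0| * (1 + 1/d) := by
        nlinarith [abs_nonneg (H 0), one_div_pos.2 hd0]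
      nlinarith
    linarith
  rcases lt_or_ge t ε with htε | htε
  · -- small t
    have hC0 : (0:ℝ) ≤ C := le_trans (abs_nonneg _) (hC t ⟨ht, htε⟩)
    have hCt : |H 0 - H t| ≤ C * t := by
      have := hC t ⟨ht, htε⟩
      rw [abs_div, abs_of_pos ht, div_le_iff₀ ht] at this
      rw [abs_sub_comm]; exact this
    have hp2 : |H 0 - H t| * (e/D) ≤ C := by
      calc |H 0 - H t| * (e/D) ≤ (C * t) * (1/t) :=
            mul_le_mul hCt heD (by positivity) (by positivity)
        _ = C := by field_simp
    have htD : t / D ≤ Real.exp ε := by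
      rw [div_le_iff₀ hD0]
      have h5 : t ≤ Real.exp t * D := by
        have h6 : t * e ≤ D := hF2
        have h7 : t = (t * e) * Real.exp t := by
          rw [he, mul_assoc, ← Real.exp_add]; simp
        nlinarith [Real.exp_pos t]
      have h6 : Real.exp t ≤ Real.exp ε := Real.exp_le_exp.2 htε.le
      nlinarith [Real.exp_pos t]
    have hp3 : |e - Real.exp (-(s*t))|/D ≤ (1+s) * Real.exp ε := by
      have h1 : |e - Real.exp (-(s*t))| ≤ |t - s*t| := exp_lip ht.le (by positivity)
      have h4 : |e - Real.exp (-(s*t))| ≤ (1+s) * t := by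
        have h2 : |t - s*t| = |1 - s| * t := by
          rw [show t - s*t = (1-s)*t by ring, abs_mul, abs_of_pos ht]
        have h3 : |1 - s| ≤ 1 + s := by
          rw [abs_le]; constructor <;> linarith
        rw [h2] at h1
        nlinarith
      calc |e - Real.exp (-(s*t))|/D ≤ ((1+s)*t)/D := by gcongr
        _ = (1+s) * (t/D) := by ring
        _ ≤ (1+s) * Real.exp ε := by nlinarith
    have hind : (Ioo (0:ℝ) ε).indicator (fun _ => C) t = C :=
      Set.indicator_of_mem (show t ∈ Ioo (0:ℝ) ε from ⟨ht, htε⟩) _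
    rw [hind]
    have hp3' : |H t| * (|e - Real.exp (-(s*t))|/D) ≤ b * |H t| := by
      have h1 : |H t| * (|e - Real.exp (-(s*t))|/D) ≤ |H t| * ((1+s) * Real.exp ε) :=
        mul_le_mul_of_nonneg_left hp3 (abs_nonneg _)
      have h2 : (1+s) * Real.exp ε ≤ b := by
        rw [hb]
        have : (0:ℝ) < 2/d := by positivity
        linarith
      calc |H t| * (|e - Real.exp (-(s*t))|/D) ≤ |H t| * ((1+s) * Real.exp ε) := h1
        _ ≤ |H t| * b := mul_le_mul_of_nonneg_left h2 (abs_nonneg _)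
        _ = b * |H t| := mul_comm _ _
    linarith
  · -- large t
    have hDd : d ≤ D := by
      have : Real.exp (-t) ≤ Real.exp (-ε) := Real.exp_le_exp.2 (by linarith)
      simp only [hd, hD]; linarith
    have hind : (Ioo (0:ℝ) ε).indicator (fun _ => C) t = 0 := by
      apply Set.indicator_of_notMem
      intro hmem
      exact absurd hmem.2 (not_lt.2 htε)
    rw [hind]
    have heD' : e/D ≤ e/d := by gcongr
    have he1' : e ≤ 1 := he1.le
    have hp2 : |H 0 - H t| * (e/D) ≤ (|H 0| / d) * e + (1/d) * |H t| := by
      have h1 : |H 0 - H t| ≤ |H 0| + |H t| := abs_sub (H 0) (H t)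
      have h2 : |H 0 - H t| * (e/D) ≤ (|H 0| + |H t|) * (e/d) :=
        mul_le_mul h1 heD' (div_nonneg he0.le hD0.le) (by positivity)
      have h3 : (|H 0| + |H t|) * (e/d) = (|H 0|/d) * e + (|H t|/d) * e := by ring
      have h4 : (|H t|/d) * e ≤ (1/d) * |H t| := by
        calc (|H t|/d) * e ≤ (|H t|/d) * 1 :=
              mul_le_mul_of_nonneg_left he1' (div_nonneg (abs_nonneg _) hd0.le)
          _ = (1/d) * |H t| := by ring
      linarith
    have hp3 : |H t| * (|e - Real.exp (-(s*t))|/D) ≤ (1/d) * |H t| := by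
      have h1 : |e - Real.exp (-(s*t))| ≤ 1 := by
        have hx : 0 < Real.exp (-(s*t)) := Real.exp_pos _
        have hy : Real.exp (-(s*t)) ≤ 1 :=
          Real.exp_le_one_iff.2 (neg_nonpos.2 (mul_nonneg hs ht.le))
        rw [abs_le]; constructor <;> nlinarith
      have h2 : |e - Real.exp (-(s*t))|/D ≤ 1/d := by
        apply div_le_div₀ (by norm_num) h1 hd0 hDd
      nlinarith [abs_nonneg (H t)]
    have hB1' : |H 0| * |e/t - e/D| + |H 0|/d * e ≤ a * e := by
      have h1 : |H 0| * |e/t - e/D| ≤ |H 0| * e :=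
        mul_le_mul_of_nonneg_left hp1 (abs_nonneg _)
      have h2 : a * e = |H 0| * e + (|H 0|/d) * e := by rw [ha]; ring
      linarith
    have hb2 : (2/d) * |H t| ≤ b * |H t| := by
      have : 2/d ≤ b := by
        rw [hb]
        nlinarith [Real.exp_pos ε]
      nlinarith [abs_nonneg (H t)]
    have : (1/d) * |H t| + (1/d) * |H t| = (2/d) * |H t| := by ring
    linarith

lemma abs_cast_sub (i j : ℕ) : |(i : ℝ) - (j : ℝ)| = (((i - j) + (j - i) : ℕ) : ℝ) := by
  rcases le_total i j with h | h
  · rw [abs_of_nonpos (by simp; exact_mod_cast h), Nat.sub_eq_zero_of_le h]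
    push_cast [Nat.cast_sub h]
    ring
  · rw [abs_of_nonneg (by simp; exact_mod_cast h), Nat.sub_eq_zero_of_le h]
    push_cast [Nat.cast_sub h]
    ring

lemma qH_nonpos (H : ℝ → ℝ)
    (hInt : IntegrableOn H (Ici 0))
    (hpos : ∀ t, 0 ≤ t → 0 ≤ H t)
    (hbd : ∃ ε > (0 : ℝ), ∃ C : ℝ, ∀ t ∈ Ioo (0 : ℝ) ε, |(H t - H 0) / t| ≤ C)
    (m : ℕ) (y : Fin (m + 1) → ℝ) (hy : ∑ i, y i = 0) :
    qH H m y ≤ 0 := by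
  set g : Fin (m+1) → Fin (m+1) → ℝ → ℝ := fun i j t =>
    y i * y j * (H 0 * Real.exp (-t) / t
      - H t * Real.exp (-(|(i.1 : ℝ) - (j.1 : ℝ)| * t)) / (1 - Real.exp (-t))) with hg
  have hI : ∀ i j : Fin (m+1), Integrable (g i j) (volume.restrict (Ioi (0:ℝ))) := by
    intro i j
    exact (fH_integrable H hInt hbd _ (abs_nonneg _)).const_mul _
  have step1 : qH H m y = ∫ t in Ioi (0:ℝ), ∑ i, ∑ j, g i j t := by
    rw [qH, bH]
    calc ∑ i, ∑ j, y i * y j * psiH H |(i.1 : ℝ) - (j.1 : ℝ)|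
        = ∑ i, ∑ j, ∫ t in Ioi (0:ℝ), g i j t := by
          apply Finset.sum_congr rfl; intro i _
          apply Finset.sum_congr rfl; intro j _
          rw [psiH, ← integral_const_mul]
      _ = ∑ i, ∫ t in Ioi (0:ℝ), ∑ j, g i j t :=
          Finset.sum_congr rfl fun i _ => (integral_finset_sum _ (fun j _ => hI i j)).symm
      _ = ∫ t in Ioi (0:ℝ), ∑ i, ∑ j, g i j t :=
          (integral_finset_sum _ (fun i _ => integrable_finset_sum _ (fun j _ => hI i j))).symm
  rw [step1]
  have hae : ∀ᵐ t ∂(volume.restrict (Ioi (0:ℝ))), (∑ i, ∑ j, g i j t) ≤ 0 := by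
    rw [ae_restrict_iff' measurableSet_Ioi]
    apply ae_of_all
    intro t ht
    simp only [Set.mem_Ioi] at ht
    set r : ℝ := Real.exp (-t) with hr
    have hr0 : 0 < r := Real.exp_pos _
    have hr1 : r < 1 := Real.exp_lt_one_iff.2 (by linarith)
    have hexp : ∀ i j : Fin (m+1),
        Real.exp (-(|(i.1 : ℝ) - (j.1 : ℝ)| * t)) = r ^ ((i.1 - j.1) + (j.1 - i.1)) := by
      intro i j
      rw [abs_cast_sub, hr, ← Real.exp_nat_mul]
      ring_nf
    have expand : ∀ i j : Fin (m+1), g i j t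
        = (y i * y j) * (H 0 * Real.exp (-t) / t)
          - (H t / (1 - r)) * (y i * y j * r ^ ((i.1 - j.1) + (j.1 - i.1))) := by
      intro i j
      rw [hg]
      simp only []
      rw [hexp i j]
      ring
    calc ∑ i, ∑ j, g i j t
        = (∑ i, y i) * ((∑ j, y j) * (H 0 * Real.exp (-t) / t))
          - (H t / (1 - r)) * (∑ i, ∑ j, y i * y j * r ^ ((i.1 - j.1) + (j.1 - i.1))) := by
          simp only [expand, Finset.sum_sub_distrib, ← Finset.mul_sum, ← Finset.sum_mul]
          congr 1
          rw [mul_assoc]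
      _ ≤ 0 := by
          rw [hy]
          have h1 : 0 ≤ H t / (1 - r) := div_nonneg (hpos t ht.le) (by linarith)
          have h2 : 0 ≤ ∑ i, ∑ j, y i * y j * r ^ ((i.1 - j.1) + (j.1 - i.1)) :=
            kernel_psd (m+1) y r hr0.le hr1.le
          nlinarith
  exact integral_nonpos_of_ae hae

lemma bH_comm (H : ℝ → ℝ) (n : ℕ) (x y : Fin (n+1) → ℝ) : bH H n x y = bH H n y x := by
  rw [bH, bH, Finset.sum_comm]
  apply Finset.sum_congr rfl; intro i _
  apply Finset.sum_congr rfl; intro j _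
  rw [abs_sub_comm]
  ring

lemma bH_sub_right (H : ℝ → ℝ) (n : ℕ) (x y z : Fin (n+1) → ℝ) :
    bH H n x (fun i => y i - z i) = bH H n x y - bH H n x z := by
  simp only [bH, mul_sub, sub_mul, Finset.sum_sub_distrib]

lemma sum_delta (n : ℕ) (f : Fin (n+1) → ℝ) (a : Fin (n+1)) :
    ∑ i, (if i = a then (1:ℝ) else 0) * f i = f a := by
  rw [Finset.sum_eq_single a]
  · simp
  · intro b _ hb; simp [hb]
  · intro h; exact absurd (Finset.mem_univ a) h

theorem stmt_10 (H : ℝ → ℝ)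
    (hInt : IntegrableOn H (Ici 0))
    (hpos : ∀ t, 0 ≤ t → 0 ≤ H t)
    (hne : ¬ (∀ᵐ t ∂(volume.restrict (Ioi (0 : ℝ))), H t = 0))
    (hbd : ∃ ε > (0 : ℝ), ∃ C : ℝ, ∀ t ∈ Ioo (0 : ℝ) ε, |(H t - H 0) / t| ≤ C)
    (n : ℕ) (v : Fin (n + 1) → ℝ) (v' : Fin (n + 2) → ℝ)
    (hv1 : ∑ i, v i = 1)
    (hv2 : ∀ y : Fin (n + 1) → ℝ, ∑ i, y i = 0 → bH H n v y = 0)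
    (hv'1 : ∑ i, v' i = 1)
    (hv'2 : ∀ y : Fin (n + 2) → ℝ, ∑ i, y i = 0 → bH H (n + 1) v' y = 0) :
    (psiH H 0 + psiH H n) / 2 ≤ qH H n v ∧ qH H n v ≤ qH H (n + 1) v' := by
  constructor
  · -- lower bound
    set a : Fin (n+1) := ⟨0, Nat.succ_pos n⟩ with ha
    set b : Fin (n+1) := ⟨n, Nat.lt_succ_self n⟩ with hb
    set z : Fin (n+1) → ℝ := fun i => ((if i = a then (1:ℝ) else 0) + (if i = b then 1 else 0))/2
      with hz
    have hzsum : ∑ i, z i = 1 := by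
      simp only [hz]
      rw [← Finset.sum_div, Finset.sum_add_distrib,
        Finset.sum_ite_eq' Finset.univ a (fun _ => (1:ℝ)),
        Finset.sum_ite_eq' Finset.univ b (fun _ => (1:ℝ))]
      simp
    have hbvz : bH H n v z = qH H n v := by
      have h0 : bH H n v (fun i => z i - v i) = 0 := by
        apply hv2
        rw [Finset.sum_sub_distrib, hzsum, hv1]
        ring
      rw [bH_sub_right] at h0
      rw [qH]
      linarith
    have hbzv : bH H n z v = qH H n v := by rw [bH_comm]; exact hbvz
    have hq : qH H n (fun i => v i - z i) ≤ 0 := by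
      apply qH_nonpos H hInt hpos hbd
      rw [Finset.sum_sub_distrib, hzsum, hv1]
      ring
    have hexpand : qH H n (fun i => v i - z i) = bH H n z z - qH H n v := by
      rw [qH, bH_sub_right]
      have h1 : bH H n (fun i => v i - z i) v = bH H n v v - bH H n z v := by
        rw [bH_comm, bH_sub_right, bH_comm H n v v, bH_comm H n z v]
      have h2 : bH H n (fun i => v i - z i) z = bH H n v z - bH H n z z := by
        rw [bH_comm, bH_sub_right, bH_comm H n v z, bH_comm H n z z]
      rw [h1, h2, qH, hbzv, hbvz]
      rw [qH]
      ring
    have hzz : bH H n z z = (psiH H 0 + psiH H n) / 2 := by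
      rw [bH]
      have hinner : ∀ i : Fin (n+1), ∑ j, z i * z j * psiH H |(i.1 : ℝ) - (j.1 : ℝ)|
          = z i * ((psiH H |(i.1 : ℝ) - (a.1 : ℝ)| + psiH H |(i.1 : ℝ) - (b.1 : ℝ)|)/2) := by
        intro i
        have : ∀ j : Fin (n+1), z i * z j * psiH H |(i.1 : ℝ) - (j.1 : ℝ)|
            = z i / 2 * ((if j = a then (1:ℝ) else 0) * psiH H |(i.1 : ℝ) - (j.1 : ℝ)|)
              + z i / 2 * ((if j = b then (1:ℝ) else 0) * psiH H |(i.1 : ℝ) - (j.1 : ℝ)|) := by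
          intro j
          simp only [hz]
          ring
        rw [Finset.sum_congr rfl (fun j _ => this j), Finset.sum_add_distrib,
          ← Finset.mul_sum, ← Finset.mul_sum, sum_delta, sum_delta]
        ring
      rw [Finset.sum_congr rfl (fun i _ => hinner i)]
      have houter : ∀ i : Fin (n+1), z i * ((psiH H |(i.1 : ℝ) - (a.1 : ℝ)| + psiH H |(i.1 : ℝ) - (b.1 : ℝ)|)/2)
          = (if i = a then (1:ℝ) else 0) * (((psiH H |(i.1 : ℝ) - (a.1 : ℝ)| + psiH H |(i.1 : ℝ) - (b.1 : ℝ)|))/4)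
            + (if i = b then (1:ℝ) else 0) * (((psiH H |(i.1 : ℝ) - (a.1 : ℝ)| + psiH H |(i.1 : ℝ) - (b.1 : ℝ)|))/4) := by
        intro i
        simp only [hz]
        ring
      rw [Finset.sum_congr rfl (fun i _ => houter i), Finset.sum_add_distrib, sum_delta, sum_delta]
      have e1 : |(a.1 : ℝ) - (a.1 : ℝ)| = 0 := by simp
      have e2 : |(b.1 : ℝ) - (b.1 : ℝ)| = 0 := by simp
      have e3 : |(a.1 : ℝ) - (b.1 : ℝ)| = (n : ℝ) := by
        simp only [ha, hb]
        rw [abs_sub_comm]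
        simp
      have e4 : |(b.1 : ℝ) - (a.1 : ℝ)| = (n : ℝ) := by
        simp only [ha, hb]
        simp
      rw [e1, e2, e3, e4]
      ring
    linarith
  · -- upper bound
    set w : Fin (n+2) → ℝ := Fin.snoc v 0 with hwdef
    have hwsum : ∑ i, w i = 1 := by
      rw [Fin.sum_univ_castSucc]
      simp only [hwdef, Fin.snoc_castSucc, Fin.snoc_last]
      rw [hv1]; ring
    have hqw : qH H (n+1) w = qH H n v := by
      rw [qH, bH, Fin.sum_univ_castSucc]
      simp only [hwdef, Fin.snoc_castSucc, Fin.snoc_last, zero_mul, mul_zero,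
        Finset.sum_const_zero, add_zero]
      rw [qH, bH]
      apply Finset.sum_congr rfl; intro i _
      rw [Fin.sum_univ_castSucc]
      simp only [Fin.snoc_castSucc, Fin.snoc_last, mul_zero, zero_mul, add_zero,
        Fin.coe_castSucc]
    have hbv'w : bH H (n+1) v' w = qH H (n+1) v' := by
      have h0 : bH H (n+1) v' (fun i => w i - v' i) = 0 := by
        apply hv'2
        rw [Finset.sum_sub_distrib, hwsum, hv'1]
        ring
      rw [bH_sub_right] at h0
      rw [qH]
      linarith
    have hq : qH H (n+1) (fun i => w i - v' i) ≤ 0 := by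
      apply qH_nonpos H hInt hpos hbd
      rw [Finset.sum_sub_distrib, hwsum, hv'1]
      ring
    have hexpand : qH H (n+1) (fun i => w i - v' i) = qH H (n+1) w - qH H (n+1) v' := by
      rw [qH, bH_sub_right]
      have h1 : bH H (n+1) (fun i => w i - v' i) w = bH H (n+1) w w - bH H (n+1) v' w := by
        rw [bH_comm, bH_sub_right, bH_comm H (n+1) w w, bH_comm H (n+1) v' w]
      have h2 : bH H (n+1) (fun i => w i - v' i) v' = bH H (n+1) w v' - bH H (n+1) v' v' := by
        rw [bH_comm, bH_sub_right, bH_comm H (n+1) w v', bH_comm H (n+1) v' v']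
      rw [h1, h2]
      have h3 : bH H (n+1) w v' = qH H (n+1) v' := by rw [bH_comm]; exact hbv'w
      rw [h3, hbv'w, qH, qH]
      ring
    linarith [hqw ▸ hexpand ▸ hq]
end

section
/- With notation as above, if t ≠ t_n^H then 1/(t − t_n^H) equals the sum of all entries of the inverse of the (n+1)×(n+1) matrix (t − ψ_H(|i−j|))_{0≤i,j≤n}. -/
open MeasureTheory Set Finset

noncomputable def kmsW (r : ℝ) (y : ℕ → ℝ) (m : ℕ) : ℝ :=
  ∑ j ∈ range (m + 1), r ^ (m - j) * y j

lemma kmsW_succ (r : ℝ) (y : ℕ → ℝ) (m : ℕ) :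
    kmsW r y (m + 1) = r * kmsW r y m + y (m + 1) := by
  unfold kmsW
  rw [Finset.sum_range_succ, Finset.mul_sum]
  simp only [Nat.sub_self, pow_zero, one_mul]
  congr 1
  refine Finset.sum_congr rfl fun j hj => ?_
  have hj' : j ≤ m := Nat.lt_succ_iff.mp (Finset.mem_range.mp hj)
  rw [← mul_assoc, ← pow_succ']
  congr 2
  omega

lemma kms_identity (r : ℝ) (y : ℕ → ℝ) (N : ℕ) :
    ∑ i ∈ range (N + 1), ∑ j ∈ range (N + 1), y i * y j * r ^ (Nat.dist i j)
      = (kmsW r y N) ^ 2 + (1 - r ^ 2) * ∑ i ∈ range N, (kmsW r y i) ^ 2 := by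
  induction N with
  | zero => simp [kmsW, Nat.dist_self]; ring
  | succ N ih =>
    have hw : ∑ j ∈ range (N + 1), r ^ (N + 1 - j) * y j = r * kmsW r y N := by
      unfold kmsW
      rw [Finset.mul_sum]
      refine Finset.sum_congr rfl fun j hj => ?_
      have hj' : j ≤ N := Nat.lt_succ_iff.mp (Finset.mem_range.mp hj)
      rw [← mul_assoc, ← pow_succ']
      congr 2
      omega
    have hrow : (∑ i ∈ range (N + 1), ∑ j ∈ range (N + 2), y i * y j * r ^ (Nat.dist i j))
        = ∑ i ∈ range (N + 1),
            ((∑ j ∈ range (N + 1), y i * y j * r ^ (Nat.dist i j))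
              + y i * y (N + 1) * r ^ (Nat.dist i (N + 1))) :=
      Finset.sum_congr rfl fun i _ => Finset.sum_range_succ _ _
    have hcross : ∑ i ∈ range (N + 1), y i * y (N + 1) * r ^ (Nat.dist i (N + 1))
        = y (N + 1) * (r * kmsW r y N) := by
      rw [← hw, Finset.mul_sum]
      refine Finset.sum_congr rfl fun i hi => ?_
      have : Nat.dist i (N + 1) = N + 1 - i :=
        Nat.dist_eq_sub_of_le (by have := Finset.mem_range.mp hi; omega)
      rw [this]; ring
    have hcross' : ∑ j ∈ range (N + 1), y (N + 1) * y j * r ^ (Nat.dist (N + 1) j)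
        = y (N + 1) * (r * kmsW r y N) := by
      rw [← hcross]
      refine Finset.sum_congr rfl fun j _ => ?_
      rw [Nat.dist_comm]; ring
    rw [show N + 1 + 1 = N + 2 from rfl]
    rw [Finset.sum_range_succ, hrow, Finset.sum_add_distrib, ih, hcross,
        Finset.sum_range_succ, hcross', Nat.dist_self, Finset.sum_range_succ, kmsW_succ]
    ring

lemma kms_y_zero (r : ℝ) (y : ℕ → ℝ) (N : ℕ) (h : ∀ i ≤ N, kmsW r y i = 0) :
    ∀ i ≤ N, y i = 0 := by
  intro i hi
  induction i with
  | zero =>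
    have := h 0 (Nat.zero_le _)
    simpa [kmsW] using this
  | succ m ihm =>
    have h1 := h (m + 1) hi
    have h2 := h m (by omega)
    have := kmsW_succ r y m
    rw [h1, h2] at this
    linarith

lemma kms_pos {r : ℝ} (hr0 : 0 < r) (hr1 : r < 1) (y : ℕ → ℝ) (N : ℕ)
    (hy : ∃ i ≤ N, y i ≠ 0) :
    0 < ∑ i ∈ range (N + 1), ∑ j ∈ range (N + 1), y i * y j * r ^ (Nat.dist i j) := by
  rw [kms_identity]
  have hr2 : 0 < 1 - r ^ 2 := by nlinarith
  have hsum : 0 ≤ ∑ i ∈ range N, (kmsW r y i) ^ 2 :=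
    Finset.sum_nonneg fun i _ => sq_nonneg _
  have hW : ∃ i ≤ N, kmsW r y i ≠ 0 := by
    by_contra hc
    push_neg at hc
    obtain ⟨i, hi, hyi⟩ := hy
    exact hyi (kms_y_zero r y N hc i hi)
  obtain ⟨i, hi, hWi⟩ := hW
  rcases eq_or_lt_of_le hi with heq | hlt
  · have : 0 < (kmsW r y N) ^ 2 := by subst heq; positivity
    nlinarith
  · have hmem : i ∈ range N := Finset.mem_range.mpr hlt
    have h1 : (kmsW r y i) ^ 2 ≤ ∑ j ∈ range N, (kmsW r y j) ^ 2 :=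
      Finset.single_le_sum (f := fun j => (kmsW r y j) ^ 2) (fun j _ => sq_nonneg _) hmem
    have : 0 < (kmsW r y i) ^ 2 := by positivity
    nlinarith [sq_nonneg (kmsW r y N)]

lemma exp_bounds_aux {t : ℝ} (h0 : 0 < t) (h1 : t ≤ 1/2) :
    t/2 ≤ 1 - Real.exp (-t) ∧ |Real.exp (-t) * (1 - Real.exp (-t)) - t| ≤ 5 * t^2 := by
  have hb1 : |Real.exp (-t) - 1 - (-t)| ≤ t^2 := by
    have := Real.abs_exp_sub_one_sub_id_le (x := -t) (by rw [abs_neg, abs_of_pos h0]; linarith)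
    simpa [sq, abs_neg, abs_of_pos h0] using this
  have hb2 : |Real.exp (-(2*t)) - 1 - (-(2*t))| ≤ (2*t)^2 := by
    have := Real.abs_exp_sub_one_sub_id_le (x := -(2*t)) (by rw [abs_neg, abs_of_pos (by linarith)]; linarith)
    simpa [abs_neg, abs_of_pos (show (0:ℝ) < 2*t by linarith), sq] using this
  constructor
  · have h1' := abs_le.mp hb1
    nlinarith [h1'.1, h1'.2]
  · have hsq : Real.exp (-t) * Real.exp (-t) = Real.exp (-(2*t)) := by
      rw [← Real.exp_add]; ring_nf
    have h1' := abs_le.mp hb1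
    have h2' := abs_le.mp hb2
    rw [abs_le]
    constructor <;> nlinarith [h1'.1, h1'.2, h2'.1, h2'.2]

lemma psiH_integrand_integrable (H : ℝ → ℝ)
    (hInt : IntegrableOn H (Ici 0))
    (hbd : ∃ ε > (0 : ℝ), ∃ C : ℝ, ∀ t ∈ Ioo (0 : ℝ) ε, |(H t - H 0) / t| ≤ C)
    (s : ℝ) (hs : 0 ≤ s) :
    IntegrableOn
      (fun t => H 0 * Real.exp (-t) / t - H t * Real.exp (-(s * t)) / (1 - Real.exp (-t)))
      (Ioi 0) := by
  obtain ⟨ε, hε, C, hC⟩ := hbd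
  set δ : ℝ := min (ε/2) (1/2) with hδdef
  have hδ0 : 0 < δ := lt_min (by linarith) (by norm_num)
  have hδε : δ < ε := lt_of_le_of_lt (min_le_left _ _) (by linarith)
  have hδhalf : δ ≤ 1/2 := min_le_right _ _
  -- measurability
  have hHm : AEStronglyMeasurable H (volume.restrict (Ici (0:ℝ))) :=
    hInt.aestronglyMeasurable
  have hg2m : Measurable fun t : ℝ => Real.exp (-(s*t)) / (1 - Real.exp (-t)) := by
    fun_prop
  have hg1m : Measurable fun t : ℝ => H 0 * Real.exp (-t) / t := by
    fun_prop
  have hmeas : ∀ u : Set ℝ, u ⊆ Ici (0:ℝ) → AEStronglyMeasurable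
      (fun t => H 0 * Real.exp (-t) / t - H t * Real.exp (-(s * t)) / (1 - Real.exp (-t)))
      (volume.restrict u) := by
    intro u hu
    have hHu : AEStronglyMeasurable H (volume.restrict u) :=
      hHm.mono_measure (Measure.restrict_mono hu le_rfl)
    exact hg1m.aestronglyMeasurable.sub
      ((hHu.mul hg2m.aestronglyMeasurable).congr
        (by filter_upwards with x; simp [Pi.mul_apply, mul_div_assoc]))
  have hCnn : 0 ≤ C := le_trans (abs_nonneg _) (hC (ε/2) ⟨by linarith, by linarith⟩)
  -- Part 1 : Ioc 0 δ
  have part1 : IntegrableOn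
      (fun t => H 0 * Real.exp (-t) / t - H t * Real.exp (-(s * t)) / (1 - Real.exp (-t)))
      (Ioc 0 δ) := by
    refine Integrable.mono' (g := fun _ => |H 0| * (10 + 2*s) + 2*C)
      (integrableOn_const measure_Ioc_lt_top.ne)
      (hmeas _ (fun x hx => le_of_lt hx.1)) ?_
    rw [ae_restrict_iff' measurableSet_Ioc]
    filter_upwards with τ hτ
    obtain ⟨hτ0, hτδ⟩ := hτ
    have hτhalf : τ ≤ 1/2 := le_trans hτδ hδhalf
    obtain ⟨hlow, hmid⟩ := exp_bounds_aux hτ0 hτhalf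
    have hE1 : Real.exp (-τ) < 1 := Real.exp_lt_one_iff.mpr (by linarith)
    have hden : 0 < 1 - Real.exp (-τ) := by linarith [hlow, hτ0]
    have hden' : τ/2 ≤ 1 - Real.exp (-τ) := hlow
    -- bound 1 : |exp(-τ)/τ - 1/(1-exp(-τ))| ≤ 10
    have hb1 : |Real.exp (-τ)/τ - 1/(1 - Real.exp (-τ))| ≤ 10 := by
      have heq : Real.exp (-τ)/τ - 1/(1 - Real.exp (-τ))
          = (Real.exp (-τ) * (1 - Real.exp (-τ)) - τ) / (τ * (1 - Real.exp (-τ))) := by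
        field_simp
      rw [heq, abs_div]
      have hdpos : 0 < τ * (1 - Real.exp (-τ)) := mul_pos hτ0 hden
      rw [abs_of_pos hdpos, div_le_iff₀ hdpos]
      have : τ * (τ/2) ≤ τ * (1 - Real.exp (-τ)) := by nlinarith
      nlinarith [hmid]
    -- bound 2 : (1 - exp(-(s τ)))/(1 - exp(-τ)) ≤ 2 s
    have hb2 : (1 - Real.exp (-(s*τ)))/(1 - Real.exp (-τ)) ≤ 2*s := by
      have h1 : 1 - s*τ ≤ Real.exp (-(s*τ)) := by
        have := Real.add_one_le_exp (-(s*τ)); linarith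
      rw [div_le_iff₀ hden]
      nlinarith
    have hb2' : 0 ≤ 1 - Real.exp (-(s*τ)) := by
      have : Real.exp (-(s*τ)) ≤ 1 := Real.exp_le_one_iff.mpr (by nlinarith)
      linarith
    have hexps1 : Real.exp (-(s*τ)) ≤ 1 := by linarith
    -- bound on first block
    have hA : |H 0 * (Real.exp (-τ)/τ - Real.exp (-(s*τ))/(1 - Real.exp (-τ)))|
        ≤ |H 0| * (10 + 2*s) := by
      rw [abs_mul]
      have : |Real.exp (-τ)/τ - Real.exp (-(s*τ))/(1 - Real.exp (-τ))| ≤ 10 + 2*s := by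
        have hsplit : Real.exp (-τ)/τ - Real.exp (-(s*τ))/(1 - Real.exp (-τ))
            = (Real.exp (-τ)/τ - 1/(1 - Real.exp (-τ)))
              + (1 - Real.exp (-(s*τ)))/(1 - Real.exp (-τ)) := by
          field_simp
          ring
        rw [hsplit]
        refine le_trans (abs_add_le _ _) ?_
        have h2 : |(1 - Real.exp (-(s*τ)))/(1 - Real.exp (-τ))| ≤ 2*s := by
          rw [abs_of_nonneg (div_nonneg hb2' (le_of_lt hden))]; exact hb2
        linarith [hb1]
      exact mul_le_mul_of_nonneg_left this (abs_nonneg _)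
    -- bound on second block
    have hB : |(H 0 - H τ) * (Real.exp (-(s*τ))/(1 - Real.exp (-τ)))| ≤ 2*C := by
      rw [abs_mul]
      have h1 : |H 0 - H τ| ≤ C * τ := by
        have := hC τ ⟨hτ0, lt_of_le_of_lt hτδ hδε⟩
        rw [abs_div, abs_of_pos hτ0, div_le_iff₀ hτ0] at this
        rw [abs_sub_comm]; linarith
      have h2 : |Real.exp (-(s*τ))/(1 - Real.exp (-τ))| ≤ 2/τ := by
        rw [abs_of_nonneg (div_nonneg (Real.exp_nonneg _) (le_of_lt hden))]
        rw [div_le_div_iff₀ hden hτ0]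
        nlinarith
      calc |H 0 - H τ| * |Real.exp (-(s*τ))/(1 - Real.exp (-τ))|
          ≤ (C * τ) * (2/τ) := by
            apply mul_le_mul h1 h2 (abs_nonneg _) (by positivity)
        _ = 2*C := by field_simp
    have hdecomp : H 0 * Real.exp (-τ)/τ - H τ * Real.exp (-(s*τ))/(1 - Real.exp (-τ))
        = H 0 * (Real.exp (-τ)/τ - Real.exp (-(s*τ))/(1 - Real.exp (-τ)))
          + (H 0 - H τ) * (Real.exp (-(s*τ))/(1 - Real.exp (-τ))) := by ring
    calc ‖H 0 * Real.exp (-τ)/τ - H τ * Real.exp (-(s*τ))/(1 - Real.exp (-τ))‖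
        = |H 0 * (Real.exp (-τ)/τ - Real.exp (-(s*τ))/(1 - Real.exp (-τ)))
            + (H 0 - H τ) * (Real.exp (-(s*τ))/(1 - Real.exp (-τ)))| := by
          rw [Real.norm_eq_abs, hdecomp]
      _ ≤ |H 0| * (10 + 2*s) + 2*C := le_trans (abs_add_le _ _) (add_le_add hA hB)
  -- Part 2 : Ioi δ
  have part2 : IntegrableOn
      (fun t => H 0 * Real.exp (-t) / t - H t * Real.exp (-(s * t)) / (1 - Real.exp (-t)))
      (Ioi δ) := by
    have i1 : IntegrableOn (fun t => H 0 * Real.exp (-t) / t) (Ioi δ) := by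
      refine Integrable.mono' (g := fun t => (|H 0|/δ) * Real.exp (-(1:ℝ) * t))
        ((exp_neg_integrableOn_Ioi δ one_pos).const_mul _)
        (hg1m.aestronglyMeasurable.mono_measure le_rfl) ?_
      rw [ae_restrict_iff' measurableSet_Ioi]
      filter_upwards with τ hτ
      have hτ : δ < τ := hτ
      have hτ0 : (0:ℝ) < τ := lt_trans hδ0 hτ
      rw [neg_one_mul, Real.norm_eq_abs, abs_div, abs_mul, abs_of_pos hτ0,
        abs_of_pos (Real.exp_pos _), div_mul_eq_mul_div, mul_comm (|H 0|)]
      gcongr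
    have i2 : IntegrableOn (fun t => H t * Real.exp (-(s * t)) / (1 - Real.exp (-t))) (Ioi δ) := by
      have hHi : IntegrableOn H (Ioi δ) :=
        hInt.mono_set (fun x hx => le_of_lt (lt_trans hδ0 hx))
      have hdenδ : 0 < 1 - Real.exp (-δ) := by
        have : Real.exp (-δ) < 1 := Real.exp_lt_one_iff.mpr (by linarith)
        linarith
      refine Integrable.mono' (g := fun t => (1/(1 - Real.exp (-δ))) * |H t|)
        ((hHi.norm.const_mul _)) ?_ ?_
      · have hHu : AEStronglyMeasurable H (volume.restrict (Ioi δ)) :=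
          hHm.mono_measure (Measure.restrict_mono (fun x hx => le_of_lt (lt_trans hδ0 hx)) le_rfl)
        exact (hHu.mul hg2m.aestronglyMeasurable).congr
          (by filter_upwards with x; simp [Pi.mul_apply, mul_div_assoc])
      · rw [ae_restrict_iff' measurableSet_Ioi]
        filter_upwards with τ hτ
        have hτδ : δ < τ := hτ
        have hden : 1 - Real.exp (-δ) ≤ 1 - Real.exp (-τ) := by
          have : Real.exp (-τ) ≤ Real.exp (-δ) := Real.exp_le_exp.mpr (by linarith)
          linarith
        have hdenτ : 0 < 1 - Real.exp (-τ) := lt_of_lt_of_le hdenδ hden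
        rw [Real.norm_eq_abs, abs_div, abs_mul, abs_of_pos hdenτ]
        have hexp1 : |Real.exp (-(s*τ))| ≤ 1 := by
          rw [abs_of_pos (Real.exp_pos _)]
          exact Real.exp_le_one_iff.mpr (by nlinarith [lt_trans hδ0 hτδ])
        calc |H τ| * |Real.exp (-(s*τ))| / (1 - Real.exp (-τ))
            ≤ |H τ| * 1 / (1 - Real.exp (-δ)) := by
              apply div_le_div₀ (by positivity)
                (mul_le_mul_of_nonneg_left hexp1 (abs_nonneg _)) hdenδ hden
          _ = 1/(1 - Real.exp (-δ)) * |H τ| := by ring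
    exact i1.sub i2
  have : Ioc (0:ℝ) δ ∪ Ioi δ = Ioi (0:ℝ) := Ioc_union_Ioi_eq_Ioi (le_of_lt hδ0)
  rw [← this]
  exact part1.union part2


lemma nat_abs_cast (a b : ℕ) : |(a : ℝ) - (b : ℝ)| = (Nat.dist a b : ℝ) := by
  rcases le_total b a with h | h
  · rw [Nat.dist_comm, Nat.dist_eq_sub_of_le h, Nat.cast_sub h,
      abs_of_nonneg (sub_nonneg.mpr (Nat.cast_le.mpr h))]
  · rw [Nat.dist_eq_sub_of_le h, Nat.cast_sub h,
      abs_of_nonpos (sub_nonpos.mpr (Nat.cast_le.mpr h))]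
    ring

lemma Q_pos (n : ℕ) (y : Fin (n + 1) → ℝ) (hy : y ≠ 0) (τ : ℝ) (hτ : 0 < τ) :
    0 < ∑ i : Fin (n+1), ∑ j : Fin (n+1),
      y i * y j * Real.exp (-(|(i.1 : ℝ) - (j.1 : ℝ)| * τ)) := by
  set Y : ℕ → ℝ := fun k => if h : k < n + 1 then y ⟨k, h⟩ else 0 with hY
  have hYeq : ∀ i : Fin (n+1), Y i.1 = y i := by
    intro i; simp only [hY, dif_pos i.2]
  have hterm : ∀ i j : Fin (n+1),
      y i * y j * Real.exp (-(|(i.1 : ℝ) - (j.1 : ℝ)| * τ))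
        = Y i.1 * Y j.1 * (Real.exp (-τ)) ^ (Nat.dist i.1 j.1) := by
    intro i j
    rw [hYeq, hYeq, nat_abs_cast, show -((Nat.dist i.1 j.1 : ℝ) * τ) = (Nat.dist i.1 j.1 : ℝ) * (-τ) by ring,
      Real.exp_nat_mul]
  have hsum : (∑ i : Fin (n+1), ∑ j : Fin (n+1),
        y i * y j * Real.exp (-(|(i.1 : ℝ) - (j.1 : ℝ)| * τ)))
      = ∑ i ∈ range (n+1), ∑ j ∈ range (n+1), Y i * Y j * (Real.exp (-τ)) ^ (Nat.dist i j) := by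
    rw [← Fin.sum_univ_eq_sum_range
      (fun i => ∑ j ∈ range (n+1), Y i * Y j * (Real.exp (-τ)) ^ (Nat.dist i j))]
    refine Finset.sum_congr rfl fun i _ => ?_
    rw [← Fin.sum_univ_eq_sum_range (fun j => Y i.1 * Y j * (Real.exp (-τ)) ^ (Nat.dist i.1 j))]
    exact Finset.sum_congr rfl fun j _ => hterm i j
  rw [hsum]
  refine kms_pos (Real.exp_pos _) (Real.exp_lt_one_iff.mpr (by linarith)) Y n ?_
  obtain ⟨i, hi⟩ := Function.ne_iff.mp hy
  exact ⟨i.1, Nat.lt_succ_iff.mp i.2, by rw [hYeq]; exact hi⟩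

lemma bH_neg (H : ℝ → ℝ)
    (hInt : IntegrableOn H (Ici 0))
    (hpos : ∀ t, 0 ≤ t → 0 ≤ H t)
    (hne : ¬ (∀ᵐ t ∂(volume.restrict (Ioi (0 : ℝ))), H t = 0))
    (hbd : ∃ ε > (0 : ℝ), ∃ C : ℝ, ∀ t ∈ Ioo (0 : ℝ) ε, |(H t - H 0) / t| ≤ C)
    (n : ℕ) (y : Fin (n + 1) → ℝ)
    (hy0 : ∑ i, y i = 0) (hy : y ≠ 0) : bH H n y y < 0 := by
  set f : ℝ → ℝ → ℝ :=
    fun s t => H 0 * Real.exp (-t) / t - H t * Real.exp (-(s * t)) / (1 - Real.exp (-t)) with hf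
  have hfi : ∀ i j : Fin (n+1),
      Integrable (fun τ => y i * y j * f |(i.1:ℝ) - (j.1:ℝ)| τ) (volume.restrict (Ioi 0)) := by
    intro i j
    exact (psiH_integrand_integrable H hInt hbd _ (abs_nonneg _)).const_mul _
  set T : ℝ → ℝ := fun τ => ∑ i : Fin (n+1), ∑ j : Fin (n+1),
      y i * y j * f |(i.1:ℝ) - (j.1:ℝ)| τ with hT
  have hTi : Integrable T (volume.restrict (Ioi 0)) := by
    apply integrable_finset_sum
    intro i _
    exact integrable_finset_sum _ (fun j _ => hfi i j)
  have hbHT : bH H n y y = ∫ τ in Ioi (0:ℝ), T τ := by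
    rw [integral_finset_sum _ (fun i _ => integrable_finset_sum _ (fun j _ => hfi i j))]
    refine Finset.sum_congr rfl fun i _ => ?_
    rw [integral_finset_sum _ (fun j _ => hfi i j)]
    refine Finset.sum_congr rfl fun j _ => ?_
    rw [integral_const_mul]
    rfl
  -- pointwise formula on Ioi 0
  have hTval : ∀ τ ∈ Ioi (0:ℝ), T τ = -(H τ / (1 - Real.exp (-τ))
      * ∑ i : Fin (n+1), ∑ j : Fin (n+1), y i * y j * Real.exp (-(|(i.1:ℝ) - (j.1:ℝ)| * τ))) := by
    intro τ _
    have : T τ = (∑ i, y i) * (∑ j, y j) * (H 0 * Real.exp (-τ) / τ)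
        - ∑ i : Fin (n+1), ∑ j : Fin (n+1),
            (H τ / (1 - Real.exp (-τ))) * (y i * y j * Real.exp (-(|(i.1:ℝ) - (j.1:ℝ)| * τ))) := by
      rw [hT, Finset.sum_mul, Finset.sum_mul, ← Finset.sum_sub_distrib]
      refine Finset.sum_congr rfl fun i _ => ?_
      rw [Finset.mul_sum, Finset.sum_mul, ← Finset.sum_sub_distrib]
      refine Finset.sum_congr rfl fun j _ => ?_
      simp only [hf]
      ring
    rw [this, hy0]
    have h1 : ∑ i : Fin (n+1), ∑ j : Fin (n+1),
        (H τ / (1 - Real.exp (-τ))) * (y i * y j * Real.exp (-(|(i.1:ℝ) - (j.1:ℝ)| * τ)))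
        = (H τ / (1 - Real.exp (-τ))) * ∑ i : Fin (n+1), ∑ j : Fin (n+1),
            (y i * y j * Real.exp (-(|(i.1:ℝ) - (j.1:ℝ)| * τ))) := by
      rw [Finset.mul_sum]
      exact Finset.sum_congr rfl fun i _ => (Finset.mul_sum _ _ _).symm
    rw [h1]
    ring
  have hTnonpos : ∀ᵐ τ ∂(volume.restrict (Ioi (0:ℝ))), 0 ≤ -T τ := by
    rw [ae_restrict_iff' measurableSet_Ioi]
    filter_upwards with τ hτ
    rw [hTval τ hτ, neg_neg]
    have hden : 0 < 1 - Real.exp (-τ) := by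
      have : Real.exp (-τ) < 1 := Real.exp_lt_one_iff.mpr (by simpa using hτ)
      linarith
    have := Q_pos n y hy τ hτ
    have hH := hpos τ (le_of_lt hτ)
    positivity
  have hTint : ∫ τ in Ioi (0:ℝ), T τ < 0 := by
    have hle : ∫ τ in Ioi (0:ℝ), T τ ≤ 0 := by
      apply integral_nonpos_of_ae
      filter_upwards [hTnonpos] with τ h
      have : T τ ≤ 0 := by linarith
      simpa using this
    rcases lt_or_eq_of_le hle with h | h
    · exact h
    · exfalso
      have hTz : ∫ τ in Ioi (0:ℝ), -T τ = 0 := by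
        rw [integral_neg, h, neg_zero]
      have := (integral_eq_zero_iff_of_nonneg_ae hTnonpos hTi.neg).mp hTz
      apply hne
      filter_upwards [this, ae_restrict_mem measurableSet_Ioi] with τ hτ0 hτmem
      have hval := hTval τ hτmem
      have hT0 : T τ = 0 := by
        have : -T τ = 0 := hτ0
        linarith
      rw [hT0] at hval
      have hden : 0 < 1 - Real.exp (-τ) := by
        have : Real.exp (-τ) < 1 := Real.exp_lt_one_iff.mpr (by simpa using hτmem)
        linarith
      have hQ := Q_pos n y hy τ hτmem
      have hcQ : H τ / (1 - Real.exp (-τ))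
          * (∑ i : Fin (n+1), ∑ j : Fin (n+1),
              y i * y j * Real.exp (-(|(i.1:ℝ) - (j.1:ℝ)| * τ))) = 0 := by
        have := hval.symm
        linarith [hval]
      rcases mul_eq_zero.mp hcQ with h' | h'
      · rcases div_eq_zero_iff.mp h' with h'' | h''
        · exact h''
        · exact absurd h'' (ne_of_gt hden)
      · exact absurd h' (ne_of_gt hQ)
  rw [hbHT]
  exact hTint

theorem stmt_11 (H : ℝ → ℝ)
    (hInt : IntegrableOn H (Ici 0))
    (hpos : ∀ t, 0 ≤ t → 0 ≤ H t)
    (hne : ¬ (∀ᵐ t ∂(volume.restrict (Ioi (0 : ℝ))), H t = 0))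
    (hbd : ∃ ε > (0 : ℝ), ∃ C : ℝ, ∀ t ∈ Ioo (0 : ℝ) ε, |(H t - H 0) / t| ≤ C)
    (n : ℕ) (v : Fin (n + 1) → ℝ)
    (hv1 : ∑ i, v i = 1)
    (hv2 : ∀ y : Fin (n + 1) → ℝ, ∑ i, y i = 0 → bH H n v y = 0)
    (t : ℝ) (ht : t ≠ qH H n v) :
    ∑ i, ∑ j,
        (Matrix.of fun i j : Fin (n + 1) => t - psiH H |(i.1 : ℝ) - (j.1 : ℝ)|)⁻¹ i j
      = 1 / (t - qH H n v) := by
  classical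
  set q : ℝ := qH H n v with hq
  set M : Matrix (Fin (n+1)) (Fin (n+1)) ℝ :=
    Matrix.of fun i j : Fin (n + 1) => t - psiH H |(i.1 : ℝ) - (j.1 : ℝ)| with hM
  -- linearity of bH in the second variable
  have blin : ∀ (x a b : Fin (n+1) → ℝ),
      bH H n x (fun j => a j - b j) = bH H n x a - bH H n x b := by
    intro x a b
    unfold bH
    rw [← Finset.sum_sub_distrib]
    refine Finset.sum_congr rfl fun i _ => ?_
    rw [← Finset.sum_sub_distrib]
    refine Finset.sum_congr rfl fun j _ => ?_
    ring
  have bsmul : ∀ (x b : Fin (n+1) → ℝ) (c : ℝ),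
      bH H n x (fun j => c * b j) = c * bH H n x b := by
    intro x b c
    unfold bH
    rw [Finset.mul_sum]
    refine Finset.sum_congr rfl fun i _ => ?_
    rw [Finset.mul_sum]
    refine Finset.sum_congr rfl fun j _ => ?_
    ring
  -- column sums against v
  have colsum : ∀ i : Fin (n+1), ∑ j, psiH H |(i.1 : ℝ) - (j.1 : ℝ)| * v j = q := by
    intro i
    set e : Fin (n+1) → ℝ := fun j => if j = i then (1:ℝ) else 0 with he
    have hsub : (∑ j, (e j - v j)) = 0 := by
      rw [Finset.sum_sub_distrib, he]
      rw [Finset.sum_ite_eq' Finset.univ i (fun _ => (1:ℝ)), if_pos (Finset.mem_univ i), hv1]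
      ring
    have h0 := hv2 _ hsub
    rw [blin] at h0
    have hei : bH H n v e = ∑ k, v k * psiH H |(k.1 : ℝ) - (i.1 : ℝ)| := by
      unfold bH
      refine Finset.sum_congr rfl fun k _ => ?_
      have hterm : ∀ j : Fin (n+1), v k * e j * psiH H |(k.1 : ℝ) - (j.1 : ℝ)|
          = if j = i then v k * psiH H |(k.1 : ℝ) - (i.1 : ℝ)| else 0 := by
        intro j
        by_cases hji : j = i
        · subst hji; simp [he]
        · simp [he, hji]
      rw [Finset.sum_congr rfl fun j _ => hterm j,
        Finset.sum_ite_eq' Finset.univ i (fun _ => v k * psiH H |(k.1 : ℝ) - (i.1 : ℝ)|),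
        if_pos (Finset.mem_univ i)]
    have hq' : bH H n v e = q := by
      have hbvv : bH H n v v = q := rfl
      linarith [h0]
    rw [hei] at hq'
    rw [← hq']
    refine Finset.sum_congr rfl fun k _ => ?_
    rw [abs_sub_comm]
    ring
  -- M.mulVec v is constant (t - q)
  have hMv : M.mulVec v = fun _ => (t - q) := by
    funext i
    show ∑ j, M i j * v j = t - q
    have : ∑ j, M i j * v j
        = ∑ j, (t * v j - psiH H |(i.1 : ℝ) - (j.1 : ℝ)| * v j) := by
      refine Finset.sum_congr rfl fun j _ => ?_
      simp only [hM, Matrix.of_apply]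
      ring
    rw [this, Finset.sum_sub_distrib, ← Finset.mul_sum, hv1, colsum i, mul_one]
  -- M is invertible
  have hdet : IsUnit M.det := by
    rw [isUnit_iff_ne_zero]
    intro hdet0
    obtain ⟨x, hx0, hx⟩ := (Matrix.exists_mulVec_eq_zero_iff).mpr hdet0
    set a : ℝ := ∑ i, x i with ha
    have hrow : ∀ i : Fin (n+1), ∑ j, psiH H |(i.1 : ℝ) - (j.1 : ℝ)| * x j = t * a := by
      intro i
      have h1 : ∑ j, M i j * x j = 0 := congrFun hx i
      have h2 : ∑ j, M i j * x j
          = t * a - ∑ j, psiH H |(i.1 : ℝ) - (j.1 : ℝ)| * x j := by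
        rw [ha, Finset.mul_sum, ← Finset.sum_sub_distrib]
        refine Finset.sum_congr rfl fun j _ => ?_
        simp only [hM, Matrix.of_apply]
        ring
      rw [h2] at h1
      linarith
    -- bH v x = t * a
    have hbvx1 : bH H n v x = t * a := by
      unfold bH
      have : ∀ k : Fin (n+1), ∑ j, v k * x j * psiH H |(k.1 : ℝ) - (j.1 : ℝ)|
          = v k * (t * a) := by
        intro k
        rw [← hrow k, Finset.mul_sum]
        refine Finset.sum_congr rfl fun j _ => ?_
        ring
      rw [Finset.sum_congr rfl fun k _ => this k, ← Finset.sum_mul, hv1, one_mul]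
    -- bH v x = a * q
    have hbvx2 : bH H n v x = a * q := by
      have hsub : (∑ i, (x i - a * v i)) = 0 := by
        rw [Finset.sum_sub_distrib, ← Finset.mul_sum, hv1, mul_one]
        ring
      have h0 := hv2 _ hsub
      rw [blin] at h0
      have := bsmul v v a
      have hbvv : bH H n v v = q := rfl
      rw [this, hbvv] at h0
      linarith
    have ha0 : a = 0 := by
      have : a * (t - q) = 0 := by rw [hq] at *; nlinarith [hbvx1, hbvx2]
      rcases mul_eq_zero.mp this with h | h
      · exact h
      · exact absurd (by linarith : t = q) ht
    -- bH x x = 0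
    have hbxx : bH H n x x = 0 := by
      unfold bH
      have hterm : ∀ k : Fin (n+1), ∑ j, x k * x j * psiH H |(k.1 : ℝ) - (j.1 : ℝ)| = 0 := by
        intro k
        have h1 := hrow k
        rw [ha0, mul_zero] at h1
        have h2 : ∑ j, x k * x j * psiH H |(k.1 : ℝ) - (j.1 : ℝ)|
            = x k * ∑ j, psiH H |(k.1 : ℝ) - (j.1 : ℝ)| * x j := by
          rw [Finset.mul_sum]
          exact Finset.sum_congr rfl fun j _ => by ring
        rw [h2, h1, mul_zero]
      calc ∑ k : Fin (n+1), ∑ j, x k * x j * psiH H |(k.1 : ℝ) - (j.1 : ℝ)|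
          = ∑ _k : Fin (n+1), (0:ℝ) := Finset.sum_congr rfl fun k _ => hterm k
        _ = 0 := Finset.sum_const_zero
    have hxs : ∑ i, x i = 0 := by rw [← ha, ha0]
    have := bH_neg H hInt hpos hne hbd n x hxs hx0
    rw [hbxx] at this
    exact lt_irrefl 0 this
  -- conclude
  have hinv : M⁻¹.mulVec (fun _ => t - q) = v := by
    rw [← hMv, Matrix.mulVec_mulVec, Matrix.nonsing_inv_mul M hdet, Matrix.one_mulVec]
  have hconst : (fun _ : Fin (n+1) => t - q) = (t - q) • (fun _ : Fin (n+1) => (1:ℝ)) := by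
    funext i; simp
  rw [hconst, Matrix.mulVec_smul] at hinv
  have hsumw : (t - q) * (∑ i, (M⁻¹.mulVec (fun _ => (1:ℝ))) i) = 1 := by
    calc (t - q) * (∑ i, (M⁻¹.mulVec (fun _ => (1:ℝ))) i)
        = ∑ i, ((t - q) • M⁻¹.mulVec (fun _ => (1:ℝ))) i := by
          rw [Finset.mul_sum]
          exact Finset.sum_congr rfl fun i _ => by simp
      _ = ∑ i, v i := by rw [hinv]
      _ = 1 := hv1
  have htq : t - q ≠ 0 := sub_ne_zero.mpr ht
  have hfinal : ∑ i, (M⁻¹.mulVec (fun _ => (1:ℝ))) i = 1 / (t - q) := by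
    rw [eq_div_iff htq]
    linear_combination hsumw
  rw [← hfinal]
  refine Finset.sum_congr rfl fun i _ => ?_
  show ∑ j, M⁻¹ i j = (M⁻¹.mulVec fun _ => (1:ℝ)) i
  simp [Matrix.mulVec, dotProduct]
end
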